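/- arXiv:1307.7672 — 6 statements merged into one kernel-verified Lean document; each statement's English description precedes it below -/
import Mathlib

section
/- Let A be a finite-dimensional (left) Leibniz algebra over a field and let M be a nonzero finite-dimensional irreducible A-module with associated representation (T, S). Then [a,a] ∈ Ker(T) ∩ Ker(S) for every a ∈ A (so that the quotient A/Ker(T,S) is a Lie algebra), and moreover either S_a = 0 for all a ∈ A, or S_a = -T_a for all a ∈ A. -/
/-- Span of all brackets `[u, v]` with `u ∈ p`, `v ∈ q`. -/
def bracketSpan {K A : Type*} [Field K] [AddCommGroup A] [Module K A]
    (br : A →ₗ[K] A →ₗ[K] A) (p q : Submodule K A) : Submodule K A :=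
  Submodule.span K {x | ∃ a ∈ p, ∃ b ∈ q, br a b = x}

/-- Derived series: `derSeries br 0 = A` and
`derSeries br (n+1) = [derSeries br n, derSeries br n]`; so `derSeries br n = A^(n+1)`.
The algebra is solvable iff some term vanishes. -/
def derSeries {K A : Type*} [Field K] [AddCommGroup A] [Module K A]
    (br : A →ₗ[K] A →ₗ[K] A) : ℕ → Submodule K A
  | 0 => ⊤
  | n + 1 => bracketSpan br (derSeries br n) (derSeries br n)

/-- Lower central series: `lcs br 0 = A` and `lcs br (n+1) = [A, lcs br n]`;
so `lcs br n = A^(n+1)`.  The algebra is nilpotent iff some term vanishes. -/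
def lcs {K A : Type*} [Field K] [AddCommGroup A] [Module K A]
    (br : A →ₗ[K] A →ₗ[K] A) : ℕ → Submodule K A
  | 0 => ⊤
  | n + 1 => bracketSpan br ⊤ (lcs br n)

/-- for a nonzero irreducible module `M` over a finite-dimensional
(left) Leibniz algebra `A` with associated representation `(T, S)`, every square
`[a, a]` lies in `Ker T ∩ Ker S` (so `A / Ker(T, S)` is a Lie algebra), and either
`S_a = 0` for all `a`, or `S_a = -T_a` for all `a`. -/
theorem leibniz_irreducible_module_squares_in_kernel
    {K A M : Type*} [Field K]
    [AddCommGroup A] [Module K A] [FiniteDimensional K A]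
    [AddCommGroup M] [Module K M] [FiniteDimensional K M] [Nontrivial M]
    (br : A →ₗ[K] A →ₗ[K] A)
    (leibniz : ∀ a b c : A, br a (br b c) = br (br a b) c + br b (br a c))
    (T S : A →ₗ[K] Module.End K M)
    (hTT : ∀ (a b : A) (m : M), T a (T b m) = T (br a b) m + T b (T a m))
    (hTS : ∀ (a b : A) (m : M), T a (S b m) = S b (T a m) + S (br a b) m)
    (hST : ∀ (a b : A) (m : M), S (br a b) m = S b (S a m) + T a (S b m))
    (hirr : ∀ N : Submodule K M,
      (∀ (a : A), ∀ m ∈ N, T a m ∈ N ∧ S a m ∈ N) → N = ⊥ ∨ N = ⊤)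
 :
    (∀ a : A, T (br a a) = 0 ∧ S (br a a) = 0) ∧
      ((∀ a : A, S a = 0) ∨ (∀ a : A, S a = -T a)) := by
  -- Key identity: S b (S a m + T a m) = 0 for all a b m
  have key : ∀ (a b : A) (m : M), S b (T a m) + S b (S a m) = 0 := by
    intro a b m
    have e := hTS a b m
    rw [hST a b m] at e
    have e2 : (S b (T a m) + S b (S a m)) + T a (S b m) = 0 + T a (S b m) := by
      rw [add_assoc, ← e, zero_add]
    exact add_right_cancel e2
  set N : Submodule K M := ⨅ b : A, LinearMap.ker (S b) with hN
  have memN : ∀ m : M, m ∈ N ↔ ∀ b : A, S b m = 0 := by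
    intro m
    simp [hN, Submodule.mem_iInf, LinearMap.mem_ker]
  have stab : ∀ (a : A), ∀ m ∈ N, T a m ∈ N ∧ S a m ∈ N := by
    intro a m hm
    rw [memN] at hm
    constructor
    · rw [memN]
      intro c
      have e := hTS a c m
      rw [hm c, hm (br a c)] at e
      simpa using e.symm
    · rw [memN]
      intro c
      rw [hm a]
      simp
  have hdich : (∀ a : A, S a = 0) ∨ (∀ a : A, S a = -T a) := by
    rcases hirr N stab with h | h
    · right
      intro a
      ext m
      have hmem : S a m + T a m ∈ N := by
        rw [memN]
        intro b
        rw [map_add, add_comm]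
        exact key a b m
      rw [h, Submodule.mem_bot] at hmem
      have : S a m = -T a m := by
        have := hmem
        rw [add_eq_zero_iff_eq_neg] at this
        exact this
      simpa using this
    · left
      intro a
      ext m
      have hm : m ∈ N := h ▸ Submodule.mem_top
      rw [memN] at hm
      simpa using hm a
  refine ⟨?_, hdich⟩
  intro a
  have hT : T (br a a) = 0 := by
    ext m
    have e : T a (T a m) = T (br a a) m + T a (T a m) := hTT a a m
    simpa using right_eq_add.mp e
  refine ⟨hT, ?_⟩
  ext m
  have e := hST a a m
  rcases hdich with h | h
  · simp [h]
  · rw [h a] at e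
    rw [e]
    simp
end

section
/- Let A be a finite-dimensional (left) Leibniz algebra over a field of characteristic zero. Then A is solvable if and only if [A,A] is nilpotent. -/
/-- Lower central series of a subalgebra `H` (computed inside the ambient algebra):
`lcsIn br H 0 = H`, `lcsIn br H (n+1) = [H, lcsIn br H n]`.
A subalgebra `H` is nilpotent iff some term vanishes. -/
def lcsIn {K A : Type*} [Field K] [AddCommGroup A] [Module K A]
    (br : A →ₗ[K] A →ₗ[K] A) (H : Submodule K A) : ℕ → Submodule K A
  | 0 => H
  | n + 1 => bracketSpan br H (lcsIn br H n)

open Module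

namespace LeibnizAux

variable {K A : Type*} [Field K] [AddCommGroup A] [Module K A]

theorem bracketSpan_le {br : A →ₗ[K] A →ₗ[K] A} {p q r : Submodule K A} :
    bracketSpan br p q ≤ r ↔ ∀ a ∈ p, ∀ b ∈ q, br a b ∈ r := by
  constructor
  · intro h a ha b hb
    exact h (Submodule.subset_span ⟨a, ha, b, hb, rfl⟩)
  · intro h
    refine Submodule.span_le.2 ?_
    rintro x ⟨a, ha, b, hb, rfl⟩
    exact h a ha b hb

theorem mem_bracketSpan {br : A →ₗ[K] A →ₗ[K] A} {p q : Submodule K A} {a b : A}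
    (ha : a ∈ p) (hb : b ∈ q) : br a b ∈ bracketSpan br p q :=
  Submodule.subset_span ⟨a, ha, b, hb, rfl⟩

theorem bracketSpan_mono {br : A →ₗ[K] A →ₗ[K] A} {p q p' q' : Submodule K A}
    (hp : p ≤ p') (hq : q ≤ q') : bracketSpan br p q ≤ bracketSpan br p' q' :=
  bracketSpan_le.2 fun a ha b hb => mem_bracketSpan (hp ha) (hq hb)

theorem derSeries_succ_le {br : A →ₗ[K] A →ₗ[K] A} (n : ℕ) :
    derSeries br (n + 1) ≤ derSeries br n := by
  induction n with
  | zero => exact le_top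
  | succ n ih => exact bracketSpan_mono ih ih

theorem derSeries_succ_le_one {br : A →ₗ[K] A →ₗ[K] A} (n : ℕ) :
    derSeries br (n + 1) ≤ derSeries br 1 := by
  induction n with
  | zero => exact le_rfl
  | succ n ih => exact le_trans (derSeries_succ_le (n + 1)) ih

/-- the easy direction -/
theorem derSeries_le_lcsIn {br : A →ₗ[K] A →ₗ[K] A} (n : ℕ) :
    derSeries br (n + 1) ≤ lcsIn br (bracketSpan br ⊤ ⊤) n := by
  induction n with
  | zero =>
    show bracketSpan br (derSeries br 0) (derSeries br 0) ≤ bracketSpan br ⊤ ⊤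
    exact le_rfl
  | succ n ih =>
    show bracketSpan br (derSeries br (n+1)) (derSeries br (n+1)) ≤
      bracketSpan br (bracketSpan br ⊤ ⊤) (lcsIn br (bracketSpan br ⊤ ⊤) n)
    exact bracketSpan_mono (derSeries_succ_le_one n) ih





variable {V : Type*} [AddCommGroup V] [Module K V]

/-- The simultaneous eigenspace of `h` with eigenvalue function `lam`. -/
def weightSpace (h : Submodule K (Module.End K V)) (lam : Module.End K V → K) :
    Submodule K V where
  carrier := {v | ∀ x ∈ h, x v = lam x • v}
  add_mem' := by
    intro a b ha hb x hx
    simp [map_add, ha x hx, hb x hx, smul_add]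
  zero_mem' := by simp
  smul_mem' := by
    intro c a ha x hx
    show x (c • a) = lam x • (c • a)
    rw [map_smul, ha x hx, smul_comm]

theorem mem_weightSpace {h : Submodule K (Module.End K V)} {lam : Module.End K V → K} {v : V} :
    v ∈ weightSpace h lam ↔ ∀ x ∈ h, x v = lam x • v := Iff.rfl

/-- Key invariance lemma (the heart of Lie's theorem): if `h` is an "ideal" of `g`,
then the simultaneous eigenspace of `h` is invariant under every `y ∈ g`. -/
theorem weightSpace_invariant [FiniteDimensional K V] [CharZero K]
    {g h : Submodule K (Module.End K V)}
    (hid : ∀ f ∈ g, ∀ x ∈ h, f * x - x * f ∈ h)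
    (lam : Module.End K V → K) {y : Module.End K V} (hy : y ∈ g)
    {w : V} (hw : w ∈ weightSpace h lam) : y w ∈ weightSpace h lam := by
  classical
  rcases eq_or_ne w 0 with rfl | hw0
  · simp
  intro x hx
  -- the cyclic vectors and spaces
  set u : ℕ → V := fun i => (y ^ i) w with hu
  have husucc : ∀ i, u (i + 1) = y (u i) := by
    intro i; simp [hu, pow_succ', Module.End.mul_apply]
  have hu0 : u 0 = w := by simp [hu]
  set Uk : ℕ → Submodule K V := fun k => Submodule.span K (u '' Set.Iio k) with hUk
  have hUle : ∀ {i j : ℕ}, i ≤ j → Uk i ≤ Uk j := by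
    intro i j hij
    exact Submodule.span_mono (Set.image_mono fun m hm => lt_of_lt_of_le hm hij)
  have hu_mem : ∀ {j k : ℕ}, j < k → u j ∈ Uk k := by
    intro j k hjk; exact Submodule.subset_span ⟨j, hjk, rfl⟩
  have hyUk : ∀ k, ∀ v ∈ Uk k, y v ∈ Uk (k + 1) := by
    intro k v hv
    induction hv using Submodule.span_induction with
    | mem z hz =>
      obtain ⟨j, hj, rfl⟩ := hz
      rw [← husucc]
      have hj' : j < k := hj
      exact hu_mem (Nat.succ_lt_succ hj')
    | zero => simp
    | add a b _ _ ha hb => rw [map_add]; exact add_mem ha hb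
    | smul c a _ ha => rw [map_smul]; exact Submodule.smul_mem _ _ ha
  -- step A
  have hA : ∀ i, ∀ x' ∈ h, x' (u i) - lam x' • u i ∈ Uk i := by
    intro i
    induction i with
    | zero =>
      intro x' hx'
      rw [hu0, hw x' hx', sub_self]
      exact zero_mem _
    | succ i ih =>
      intro x' hx'
      have hz : x' * y - y * x' ∈ h := by
        have h1 := hid y hy x' hx'
        have h2 := neg_mem h1
        simpa [neg_sub] using h2
      have e1 := ih x' hx'
      have e2 := ih _ hz
      have hrw : x' (u (i + 1)) - lam x' • u (i + 1) =
          y (x' (u i) - lam x' • u i) +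
          ((x' * y - y * x') (u i) - lam (x' * y - y * x') • u i) +
          lam (x' * y - y * x') • u i := by
        rw [husucc]
        simp only [LinearMap.sub_apply, Module.End.mul_apply, map_sub, map_smul]
        abel
      rw [hrw]
      refine add_mem (add_mem ?_ ?_) ?_
      · exact hyUk i _ e1
      · exact hUle (Nat.le_succ i) e2
      · exact Submodule.smul_mem _ _ (hu_mem (by omega))
  -- existence of n with u n ∈ Uk n
  have hex : ∃ k, u k ∈ Uk k := by
    by_contra hcon
    push_neg at hcon
    have hrank : ∀ k, k ≤ finrank K (Uk k) := by
      intro k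
      induction k with
      | zero => exact Nat.zero_le _
      | succ k ih =>
        have hlt : Uk k < Uk (k + 1) := by
          refine lt_of_le_of_ne (hUle (Nat.le_succ k)) ?_
          intro heq
          exact hcon k (heq ▸ hu_mem (Nat.lt_succ_self k))
        have := Submodule.finrank_lt_finrank_of_lt hlt
        omega
    have h1 := hrank (finrank K V + 1)
    have h2 : finrank K ↥(Uk (finrank K V + 1)) ≤ finrank K V := Submodule.finrank_le _
    omega
  set n : ℕ := Nat.find hex with hn
  have hnspec : u n ∈ Uk n := Nat.find_spec hex
  have hmin : ∀ k < n, u k ∉ Uk k := fun k hk => Nat.find_min hex hk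
  have hnpos : 0 < n := by
    rcases Nat.eq_zero_or_pos n with h0 | h
    · exfalso
      have := hnspec
      rw [h0] at this
      have : u 0 ∈ (⊥ : Submodule K V) := by
        simpa [hUk, Set.Iio, Set.image, Submodule.span_empty] using this
      rw [hu0] at this
      exact hw0 (by simpa using this)
    · exact h
  -- U := Uk n is invariant under y and all of h
  have hyUn : ∀ v ∈ Uk n, y v ∈ Uk n := by
    intro v hv
    induction hv using Submodule.span_induction with
    | mem z hz =>
      obtain ⟨j, hj, rfl⟩ := hz
      have hj' : j < n := hj
      rw [← husucc]
      rcases Nat.lt_or_ge (j + 1) n with hlt | hge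
      · exact hu_mem hlt
      · have : j + 1 = n := by omega
        rw [this]; exact hnspec
    | zero => simp
    | add a b _ _ ha hb => rw [map_add]; exact add_mem ha hb
    | smul c a _ ha => rw [map_smul]; exact Submodule.smul_mem _ _ ha
  have hxUn : ∀ x' ∈ h, ∀ v ∈ Uk n, x' v ∈ Uk n := by
    intro x' hx' v hv
    induction hv using Submodule.span_induction with
    | mem z hz =>
      obtain ⟨j, hj, rfl⟩ := hz
      have hj' : j < n := hj
      have : x' (u j) = (x' (u j) - lam x' • u j) + lam x' • u j := by abel
      rw [this]
      exact add_mem (hUle hj'.le (hA j x' hx'))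
        (Submodule.smul_mem _ _ (hu_mem hj'))
    | zero => simp
    | add a b _ _ ha hb => rw [map_add]; exact add_mem ha hb
    | smul c a _ ha => rw [map_smul]; exact Submodule.smul_mem _ _ ha
  -- linear independence of u 0, ..., u (n-1)
  have hrange : ∀ k : ℕ, Set.range (fun i : Fin k => u i) = u '' Set.Iio k := by
    intro k
    ext v
    constructor
    · rintro ⟨i, rfl⟩; exact ⟨i, i.2, rfl⟩
    · rintro ⟨j, hj, rfl⟩; exact ⟨⟨j, hj⟩, rfl⟩
  have hindk : ∀ k, k ≤ n → LinearIndependent K (fun i : Fin k => u i) := by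
    intro k
    induction k with
    | zero => intro _; exact linearIndependent_empty_type
    | succ k ih =>
      intro hk1
      have hkn : k < n := hk1
      have heq : (fun i : Fin (k+1) => u i) = Fin.snoc (fun i : Fin k => u i) (u k) := by
        funext i
        refine Fin.lastCases ?_ ?_ i
        · simp [Fin.snoc_last]
        · intro j
          simp [Fin.snoc_castSucc]
      rw [heq, linearIndependent_fin_snoc]
      refine ⟨ih hkn.le, ?_⟩
      rw [hrange k]
      exact hmin k hkn
  have hind : LinearIndependent K (fun i : Fin n => u i) := hindk n le_rfl
  -- basis of Uk n
  have hmemU : ∀ i : Fin n, u i ∈ Uk n := fun i => hu_mem i.2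
  set bU : Fin n → ↥(Uk n) := fun i => ⟨u i, hmemU i⟩ with hbU
  have hindU : LinearIndependent K bU := by
    have : (fun i : Fin n => u i) = (Uk n).subtype ∘ bU := rfl
    rw [this] at hind
    exact LinearIndependent.of_comp _ hind
  have hspanU : ⊤ ≤ Submodule.span K (Set.range bU) := by
    have hmap : Submodule.map (Uk n).subtype (Submodule.span K (Set.range bU)) =
        Submodule.map (Uk n).subtype ⊤ := by
      rw [Submodule.map_span, Submodule.map_top, Submodule.range_subtype]
      have : (Uk n).subtype '' Set.range bU = u '' Set.Iio n := by
        rw [← Set.range_comp]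
        exact hrange n
      rw [this]
    have := Submodule.map_injective_of_injective (Uk n).injective_subtype hmap
    rw [this]
  set B : Basis (Fin n) K ↥(Uk n) := Basis.mk hindU hspanU with hB
  -- trace of restriction of any x' ∈ h is n * lam x'
  have htrace : ∀ (x' : Module.End K V) (hx' : x' ∈ h),
      LinearMap.trace K ↥(Uk n) (x'.restrict (hxUn x' hx')) = (n : K) * lam x' := by
    intro x' hx'
    rw [LinearMap.trace_eq_matrix_trace K B]
    have hdiag : ∀ i : Fin n, LinearMap.toMatrix B B (x'.restrict (hxUn x' hx')) i i = lam x' := by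
      intro i
      rw [LinearMap.toMatrix_apply]
      have hBi : B i = bU i := Basis.mk_apply hindU hspanU i
      have happ : x'.restrict (hxUn x' hx') (B i) =
          lam x' • B i + ⟨x' (u i) - lam x' • u i, hUle i.2.le (hA i x' hx')⟩ := by
        apply Subtype.ext
        rw [hBi]
        show x' (u i) = lam x' • u i + (x' (u i) - lam x' • u i)
        abel
      rw [happ, map_add, map_smul]
      have h1 : B.repr (B i) i = 1 := by simp
      have h2 : B.repr ⟨x' (u i) - lam x' • u i, hUle i.2.le (hA i x' hx')⟩ i = 0 := by
        have hmem2 : (⟨x' (u i) - lam x' • u i, hUle i.2.le (hA i x' hx')⟩ : ↥(Uk n)) ∈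
            Submodule.span K (⇑B '' {j : Fin n | j < i}) := by
          have himgeq : Submodule.map (Uk n).subtype
              (Submodule.span K (⇑B '' {j : Fin n | j < i})) = Uk i := by
            rw [Submodule.map_span]
            congr 1
            ext v
            constructor
            · rintro ⟨z, ⟨j, hj, rfl⟩, rfl⟩
              have : (Uk n).subtype (B j) = u j := by rw [Basis.mk_apply]; rfl
              rw [this]
              exact ⟨j, hj, rfl⟩
            · rintro ⟨j, hj, rfl⟩
              have hji : j < (i : ℕ) := hj
              have hjn : j < n := lt_trans hji i.2
              refine ⟨B ⟨j, hjn⟩, ⟨⟨j, hjn⟩, ?_, rfl⟩, ?_⟩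
              · show (⟨j, hjn⟩ : Fin n) < i
                exact hji
              · rw [Basis.mk_apply]
                rfl
          have hmem3 : x' (u i) - lam x' • u i ∈ Submodule.map (Uk n).subtype
              (Submodule.span K (⇑B '' {j : Fin n | j < i})) := by
            rw [himgeq]
            exact hA i x' hx'
          obtain ⟨z, hz, hzeq⟩ := hmem3
          have : z = ⟨x' (u i) - lam x' • u i, hUle i.2.le (hA i x' hx')⟩ :=
            Subtype.ext hzeq
          rwa [this] at hz
        have hsupp := (Basis.mem_span_image B).1 hmem2
        by_contra hne
        have : i ∈ (B.repr ⟨x' (u i) - lam x' • u i, hUle i.2.le (hA i x' hx')⟩).support :=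
          Finsupp.mem_support_iff.2 hne
        have := hsupp this
        exact absurd this (by simp)
      rw [Finsupp.add_apply, Finsupp.smul_apply, h1, h2, smul_eq_mul, mul_one, add_zero]
    rw [Matrix.trace]
    simp only [Matrix.diag]
    rw [Finset.sum_congr rfl (fun i _ => hdiag i)]
    rw [Finset.sum_const, Finset.card_univ, Fintype.card_fin, nsmul_eq_mul]
  -- the commutator has lam = 0
  have hzh : x * y - y * x ∈ h := by
    have h1 := hid y hy x hx
    have h2 := neg_mem h1
    simpa [neg_sub] using h2
  have hlamz : lam (x * y - y * x) = 0 := by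
    have hres : (x * y - y * x).restrict (hxUn _ hzh) =
        (x.restrict (hxUn x hx)) * ((LinearMap.restrict y hyUn)) -
        ((LinearMap.restrict y hyUn)) * (x.restrict (hxUn x hx)) := by
      apply LinearMap.ext
      intro v
      apply Subtype.ext
      simp [LinearMap.restrict_apply, Module.End.mul_apply, LinearMap.sub_apply]
    have htr0 : LinearMap.trace K ↥(Uk n) ((x * y - y * x).restrict (hxUn _ hzh)) = 0 := by
      rw [hres, map_sub, LinearMap.trace_mul_comm, sub_self]
    rw [htrace _ hzh] at htr0
    have hn0 : (n : K) ≠ 0 := Nat.cast_ne_zero.2 hnpos.ne'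
    exact (mul_eq_zero.1 htr0).resolve_left hn0
  -- conclude
  have : x (y w) = y (x w) + (x * y - y * x) w := by
    simp [LinearMap.sub_apply, Module.End.mul_apply]
  rw [this, hw x hx, map_smul, hw _ hzh, hlamz, zero_smul, add_zero]


section EndAlg

variable {K : Type*} [Field K]

/-- commutator bilinear map on endomorphisms -/
noncomputable def commB (K : Type*) (V : Type*) [Field K] [AddCommGroup V] [Module K V] :
    Module.End K V →ₗ[K] Module.End K V →ₗ[K] Module.End K V :=
  LinearMap.mul K (Module.End K V) - (LinearMap.mul K (Module.End K V)).flip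

@[simp] theorem commB_apply {V : Type*} [AddCommGroup V] [Module K V]
    (f g : Module.End K V) : commB K V f g = f * g - g * f := rfl

/-- derived series starting from a submodule -/
def derFrom {A : Type*} [AddCommGroup A] [Module K A]
    (br : A →ₗ[K] A →ₗ[K] A) (g : Submodule K A) : ℕ → Submodule K A
  | 0 => g
  | n + 1 => bracketSpan br (derFrom br g n) (derFrom br g n)

theorem derFrom_mono {A : Type*} [AddCommGroup A] [Module K A]
    (br : A →ₗ[K] A →ₗ[K] A) {g g' : Submodule K A} (h : g ≤ g') (n : ℕ) :
    derFrom br g n ≤ derFrom br g' n := by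
  induction n with
  | zero => exact h
  | succ n ih => exact bracketSpan_mono ih ih

theorem derFrom_le_self {V : Type*} [AddCommGroup V] [Module K V]
    {g : Submodule K (Module.End K V)}
    (hg : ∀ f ∈ g, ∀ f' ∈ g, f * f' - f' * f ∈ g) (n : ℕ) :
    derFrom (commB K V) g n ≤ g := by
  induction n with
  | zero => exact le_rfl
  | succ n ih =>
    refine le_trans (bracketSpan_mono ih ih) ?_
    exact bracketSpan_le.2 fun a ha b hb => by simpa using hg a ha b hb

theorem exists_dual_eq_one {Q : Type*} [AddCommGroup Q] [Module K Q] {q : Q} (hq : q ≠ 0) :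
    ∃ psi : Q →ₗ[K] K, psi q = 1 := by
  let e := LinearEquiv.toSpanNonzeroSingleton K Q q hq
  obtain ⟨psi, hpsi⟩ := LinearMap.exists_extend (e.symm : ↥(Submodule.span K {q}) →ₗ[K] K)
  refine ⟨psi, ?_⟩
  have hqmem : q ∈ Submodule.span K {q} := Submodule.mem_span_singleton_self q
  have h1 : (Submodule.span K {q}).subtype ⟨q, hqmem⟩ = q := rfl
  have h2 : psi ((Submodule.span K {q}).subtype ⟨q, hqmem⟩) = e.symm ⟨q, hqmem⟩ := by
    rw [← LinearMap.comp_apply, hpsi]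
    rfl
  have h3 : e 1 = ⟨q, hqmem⟩ := by
    apply Subtype.ext
    simp [e, LinearEquiv.toSpanNonzeroSingleton_one]
  have h4 : e.symm ⟨q, hqmem⟩ = 1 := by
    rw [← h3, LinearEquiv.symm_apply_apply]
  exact h2.trans h4

/-- Lie's theorem: a solvable Lie algebra of endomorphisms over an algebraically
closed field of characteristic zero has a common eigenvector. -/
theorem exists_common_eigenvector [IsAlgClosed K] [CharZero K]
    {V : Type*} [AddCommGroup V] [Module K V] [FiniteDimensional K V] [Nontrivial V] :
    ∀ (N : ℕ) (g : Submodule K (Module.End K V)),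
      Module.finrank K g ≤ N →
      (∀ f ∈ g, ∀ f' ∈ g, f * f' - f' * f ∈ g) →
      (∃ m, derFrom (commB K V) g m = ⊥) →
      ∃ v : V, v ≠ 0 ∧ ∀ f ∈ g, ∃ c : K, f v = c • v := by
  classical
  intro N
  induction N with
  | zero =>
    intro g hrank _ _
    obtain ⟨v, hv⟩ := exists_ne (0 : V)
    refine ⟨v, hv, fun f hf => ⟨0, ?_⟩⟩
    have : g = ⊥ := by
      have := Submodule.finrank_eq_zero.1 (Nat.le_zero.1 hrank)
      exact this
    rw [this] at hf
    rw [(Submodule.mem_bot K).1 hf]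
    simp
  | succ N ih =>
    intro g hrank hclosed hsolv
    rcases eq_or_ne g ⊥ with rfl | hgbot
    · obtain ⟨v, hv⟩ := exists_ne (0 : V)
      refine ⟨v, hv, fun f hf => ⟨0, ?_⟩⟩
      rw [(Submodule.mem_bot K).1 hf]
      simp
    -- the derived subalgebra is a proper subspace
    have hg1 : bracketSpan (commB K V) g g ≤ g :=
      bracketSpan_le.2 fun a ha b hb => by simpa using hclosed a ha b hb
    have hg1ne : bracketSpan (commB K V) g g ≠ g := by
      intro heq
      obtain ⟨m, hm⟩ := hsolv
      have : ∀ k, derFrom (commB K V) g k = g := by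
        intro k
        induction k with
        | zero => rfl
        | succ k ihk => show bracketSpan _ _ _ = g; rw [ihk]; exact heq
      rw [this m] at hm
      exact hgbot hm
    have hg1lt : bracketSpan (commB K V) g g < g := lt_of_le_of_ne hg1 hg1ne
    obtain ⟨y, hyg, hyng1⟩ := SetLike.exists_of_lt hg1lt
    -- a codimension-one "ideal" h with g = h ⊔ span y
    have hyne : (Submodule.Quotient.mk (p := Submodule.comap g.subtype
        (bracketSpan (commB K V) g g)) ⟨y, hyg⟩) ≠ 0 := by
      intro hcon
      have := (Submodule.Quotient.mk_eq_zero _).1 hcon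
      exact hyng1 this
    obtain ⟨psi, hpsi⟩ := exists_dual_eq_one (K := K) hyne
    set phi : ↥g →ₗ[K] K := psi ∘ₗ Submodule.mkQ _ with hphi
    have hphiy : phi ⟨y, hyg⟩ = 1 := hpsi
    have hphig1 : ∀ z : ↥g, (z : Module.End K V) ∈ bracketSpan (commB K V) g g → phi z = 0 := by
      intro z hz
      have : Submodule.Quotient.mk (p := Submodule.comap g.subtype
          (bracketSpan (commB K V) g g)) z = 0 := by
        exact (Submodule.Quotient.mk_eq_zero _).2 hz
      rw [hphi]
      simp only [LinearMap.comp_apply, Submodule.mkQ_apply]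
      rw [this, map_zero]
    set h : Submodule K (Module.End K V) := Submodule.map g.subtype (LinearMap.ker phi) with hh
    have hhg : h ≤ g := by
      rintro z ⟨z', _, rfl⟩
      exact z'.2
    have hg1h : bracketSpan (commB K V) g g ≤ h := by
      intro z hz
      refine ⟨⟨z, hg1 hz⟩, ?_, rfl⟩
      exact LinearMap.mem_ker.2 (hphig1 _ hz)
    have hynh : y ∉ h := by
      rintro ⟨z', hz', hzeq⟩
      have : z' = ⟨y, hyg⟩ := Subtype.ext hzeq
      rw [this] at hz'
      have hz'' : phi ⟨y, hyg⟩ = 0 := LinearMap.mem_ker.1 hz'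
      rw [hphiy] at hz''
      exact one_ne_zero hz''
    have hhlt : h < g := lt_of_le_of_ne hhg (fun heq => hynh (heq ▸ hyg))
    have hhrank : Module.finrank K h ≤ N := by
      have := Submodule.finrank_lt_finrank_of_lt hhlt
      omega
    have hhid : ∀ f ∈ g, ∀ z ∈ h, f * z - z * f ∈ h := by
      intro f hf z hz
      refine hg1h ?_
      have := mem_bracketSpan (br := commB K V) hf (hhg hz)
      simpa using this
    have hhclosed : ∀ f ∈ h, ∀ f' ∈ h, f * f' - f' * f ∈ h :=
      fun f hf f' hf' => hhid f (hhg hf) f' hf'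
    have hhsolv : ∃ m, derFrom (commB K V) h m = ⊥ := by
      obtain ⟨m, hm⟩ := hsolv
      exact ⟨m, le_bot_iff.1 (hm ▸ derFrom_mono _ hhg m)⟩
    obtain ⟨v₀, hv₀ne, hv₀⟩ := ih h hhrank hhclosed hhsolv
    -- eigenvalue function
    set lam : Module.End K V → K := fun f =>
      if hf : ∃ c : K, f v₀ = c • v₀ then hf.choose else 0 with hlam
    have hlamspec : ∀ z ∈ h, z v₀ = lam z • v₀ := by
      intro z hz
      have hex : ∃ c : K, z v₀ = c • v₀ := hv₀ z hz
      rw [hlam]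
      simp only [dif_pos hex]
      exact hex.choose_spec
    set W : Submodule K V := weightSpace h lam with hW
    have hv₀W : v₀ ∈ W := hlamspec
    have hWne : Nontrivial ↥W :=
      Submodule.nontrivial_iff_ne_bot.2 fun hbot => hv₀ne (by
        have := hv₀W; rw [hbot] at this; simpa using this)
    have hWinv : ∀ f ∈ g, ∀ v ∈ W, f v ∈ W := by
      intro f hf v hv
      exact weightSpace_invariant hhid lam hf hv
    -- eigenvector of y inside W
    have : FiniteDimensional K ↥W := inferInstance
    obtain ⟨c, hc⟩ := Module.End.exists_eigenvalue
      (LinearMap.restrict y (hWinv y hyg))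
    obtain ⟨⟨v, hvW⟩, hveig⟩ := hc.exists_hasEigenvector
    refine ⟨v, fun h0 => hveig.2 (Subtype.ext h0), ?_⟩
    intro f hf
    -- decompose f = (f - phi f • y) + phi f • y
    have hker : f - phi ⟨f, hf⟩ • y ∈ h := by
      refine ⟨⟨f, hf⟩ - phi ⟨f, hf⟩ • ⟨y, hyg⟩, ?_, rfl⟩
      refine LinearMap.mem_ker.2 ?_
      rw [map_sub, map_smul, hphiy, smul_eq_mul, mul_one, sub_self]
    have hyv : y v = c • v := by
      have := hveig.1
      have h2 : (LinearMap.restrict y (hWinv y hyg)) ⟨v, hvW⟩ = c • ⟨v, hvW⟩ :=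
        Module.End.mem_eigenspace_iff.1 this
      have h3 := congrArg (Submodule.subtype W) h2
      simpa using h3
    refine ⟨lam (f - phi ⟨f, hf⟩ • y) + phi ⟨f, hf⟩ * c, ?_⟩
    have hWsub : v ∈ W := hvW
    have h4 : (f - phi ⟨f, hf⟩ • y) v = lam (f - phi ⟨f, hf⟩ • y) • v :=
      hWsub _ hker
    have h5 : f v = (f - phi ⟨f, hf⟩ • y) v + phi ⟨f, hf⟩ • y v := by
      simp [LinearMap.sub_apply, LinearMap.smul_apply]
    rw [h5, h4, hyv, add_smul, smul_smul]

universe uV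

/-- Full triangularization of a solvable Lie algebra of endomorphisms. -/
theorem exists_flag {K : Type*} [Field K] [IsAlgClosed K] [CharZero K] :
    ∀ (N : ℕ) (V : Type uV) [AddCommGroup V] [Module K V] [FiniteDimensional K V],
      finrank K V ≤ N →
      ∀ g : Submodule K (Module.End K V),
      (∀ f ∈ g, ∀ f' ∈ g, f * f' - f' * f ∈ g) →
      (∃ m, derFrom (commB K V) g m = ⊥) →
      ∃ W : ℕ → Submodule K V, W 0 = ⊥ ∧ W (finrank K V) = ⊤ ∧
        (∀ i, W i ≤ W (i + 1)) ∧
        (∀ i, ∀ f ∈ g, ∃ c : K, ∀ v ∈ W (i + 1), f v - c • v ∈ W i) := by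
  classical
  intro N
  induction N with
  | zero =>
    intro V _ _ _ hrank g _ _
    have hsub : Subsingleton V := by
      have h0 : finrank K V = 0 := Nat.le_zero.1 hrank
      exact (Module.finrank_zero_iff (R := K)).1 h0
    refine ⟨fun _ => ⊥, rfl, ?_, fun i => le_rfl, ?_⟩
    · refine Submodule.eq_top_iff'.2 fun x => ?_
      rw [Subsingleton.elim x 0]
      exact zero_mem _
    · intro i f _
      refine ⟨0, fun v hv => ?_⟩
      have : v = 0 := (Submodule.mem_bot K).1 hv
      rw [this]
      simp
  | succ N ih =>
    intro V _ _ _ hrank g hcl hsolv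
    rcases subsingleton_or_nontrivial V with hsub | hnt
    · refine ⟨fun _ => ⊥, rfl, ?_, fun i => le_rfl, ?_⟩
      · refine Submodule.eq_top_iff'.2 fun x => ?_
        rw [Subsingleton.elim x 0]
        exact zero_mem _
      · intro i f _
        refine ⟨0, fun v hv => ?_⟩
        have : v = 0 := (Submodule.mem_bot K).1 hv
        rw [this]
        simp
    -- common eigenvector
    obtain ⟨v₀, hv₀ne, hv₀⟩ := exists_common_eigenvector (finrank K g) g le_rfl hcl hsolv
    set U : Submodule K V := Submodule.span K {v₀} with hU
    have hUinv : ∀ f ∈ g, ∀ v ∈ U, f v ∈ U := by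
      intro f hf v hv
      obtain ⟨d, rfl⟩ := Submodule.mem_span_singleton.1 hv
      obtain ⟨c, hc⟩ := hv₀ f hf
      rw [map_smul, hc]
      exact Submodule.smul_mem _ _ (Submodule.smul_mem _ _
        (Submodule.mem_span_singleton_self v₀))
    have hUc : ∀ f : ↥g, U ≤ U.comap (f : Module.End K V) :=
      fun f u hu => hUinv f.1 f.2 u hu
    -- induced operators on the quotient
    set Ψ : ↥g →ₗ[K] Module.End K (V ⧸ U) :=
      { toFun := fun f => U.mapQ U (f : Module.End K V) (hUc f)
        map_add' := by
          intro a b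
          apply Submodule.linearMap_qext
          apply LinearMap.ext
          intro v
          simp [Submodule.mapQ_apply]
        map_smul' := by
          intro c a
          apply Submodule.linearMap_qext
          apply LinearMap.ext
          intro v
          simp [Submodule.mapQ_apply] } with hPsi
    have hΨapply : ∀ (f : ↥g) (v : V),
        Ψ f (Submodule.Quotient.mk v) = Submodule.Quotient.mk ((f : Module.End K V) v) := by
      intro f v
      exact Submodule.mapQ_apply U U (f : Module.End K V) (h := hUc f) v
    set g' : Submodule K (Module.End K (V ⧸ U)) := LinearMap.range Ψ with hg'
    have hcommΨ : ∀ (a b : ↥g)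
        (hab : ((a : Module.End K V) * b - (b : Module.End K V) * a) ∈ g),
        Ψ a * Ψ b - Ψ b * Ψ a =
          Ψ ⟨(a : Module.End K V) * b - (b : Module.End K V) * a, hab⟩ := by
      intro a b hab
      apply Submodule.linearMap_qext
      apply LinearMap.ext
      intro v
      simp only [LinearMap.comp_apply, Submodule.mkQ_apply, LinearMap.sub_apply,
        Module.End.mul_apply, hΨapply, LinearMap.sub_apply, Module.End.mul_apply]
      exact (Submodule.Quotient.mk_sub _).symm
    have hg'cl : ∀ F ∈ g', ∀ F' ∈ g', F * F' - F' * F ∈ g' := by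
      rintro F ⟨a, rfl⟩ F' ⟨b, rfl⟩
      rw [hcommΨ a b (hcl _ a.2 _ b.2)]
      exact ⟨_, rfl⟩
    have hg'der : ∀ k, derFrom (commB K (V ⧸ U)) g' k ≤
        Submodule.map Ψ (Submodule.comap g.subtype (derFrom (commB K V) g k)) := by
      intro k
      induction k with
      | zero =>
        show g' ≤ Submodule.map Ψ (Submodule.comap g.subtype g)
        rw [Submodule.comap_subtype_self, Submodule.map_top]
      | succ k ihk =>
        show bracketSpan _ _ _ ≤ _
        refine le_trans (bracketSpan_mono ihk ihk) (bracketSpan_le.2 ?_)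
        rintro F ⟨x, hx, rfl⟩ F' ⟨y, hy, rfl⟩
        have hmem : ((x : Module.End K V) * y - (y : Module.End K V) * x) ∈ g :=
          hcl _ x.2 _ y.2
        have heq : commB K (V ⧸ U) (Ψ x) (Ψ y) =
            Ψ ⟨(x : Module.End K V) * y - (y : Module.End K V) * x, hmem⟩ := by
          rw [commB_apply]
          exact hcommΨ x y hmem
        rw [heq]
        refine ⟨_, ?_, rfl⟩
        show ((x : Module.End K V) * y - (y : Module.End K V) * x) ∈ derFrom (commB K V) g (k+1)
        have := mem_bracketSpan (br := commB K V) hx hy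
        simp only [commB_apply] at this; exact this
    have hg'solv : ∃ m, derFrom (commB K (V ⧸ U)) g' m = ⊥ := by
      obtain ⟨m, hm⟩ := hsolv
      refine ⟨m, le_bot_iff.1 ?_⟩
      refine le_trans (hg'der m) ?_
      rw [hm]
      have h1 : Submodule.comap g.subtype (⊥ : Submodule K (Module.End K V)) = ⊥ := by
        ext z
        simp
      rw [h1, Submodule.map_bot]
    -- dimension count
    have hU1 : finrank K U = 1 := finrank_span_singleton hv₀ne
    have hQrank : finrank K (V ⧸ U) + 1 = finrank K V := by
      have := Submodule.finrank_quotient_add_finrank U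
      omega
    have hQle : finrank K (V ⧸ U) ≤ N := by omega
    obtain ⟨W', hW'0, hW'top, hW'mono, hW'prop⟩ := ih (V ⧸ U) hQle g' hg'cl hg'solv
    -- assemble the flag
    refine ⟨fun i => match i with
      | 0 => ⊥
      | (i+1) => Submodule.comap U.mkQ (W' i), rfl, ?_, ?_, ?_⟩
    · rw [← hQrank]
      show Submodule.comap U.mkQ (W' (finrank K (V ⧸ U))) = ⊤
      rw [hW'top, Submodule.comap_top]
    · intro i
      match i with
      | 0 => exact bot_le
      | (i+1) => exact Submodule.comap_mono (hW'mono i)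
    · intro i f hf
      match i with
      | 0 =>
        obtain ⟨c, hc⟩ := hv₀ f hf
        refine ⟨c, fun v hv => ?_⟩
        have hvU : v ∈ U := by
          have : U.mkQ v ∈ W' 0 := hv
          rw [hW'0] at this
          have h2 : U.mkQ v = 0 := (Submodule.mem_bot K).1 this
          rwa [Submodule.mkQ_apply, Submodule.Quotient.mk_eq_zero] at h2
        obtain ⟨d, rfl⟩ := Submodule.mem_span_singleton.1 hvU
        rw [map_smul, hc, smul_smul, smul_smul, mul_comm, sub_self]
        exact zero_mem _
      | (i+1) =>
        obtain ⟨c, hc⟩ := hW'prop i (Ψ ⟨f, hf⟩) ⟨⟨f, hf⟩, rfl⟩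
        refine ⟨c, fun v hv => ?_⟩
        show U.mkQ (f v - c • v) ∈ W' i
        have h3 : U.mkQ (f v - c • v) = Ψ ⟨f, hf⟩ (U.mkQ v) - c • (U.mkQ v) := by
          rw [map_sub, map_smul]
          congr 1
        rw [h3]
        exact hc _ hv

/-- Main result over an algebraically closed field: if the Leibniz algebra is solvable,
its derived subalgebra is nilpotent (with explicit bound `finrank K V`). -/
theorem lcsIn_eq_bot_of_solvable_algClosed {K : Type*} [Field K] [IsAlgClosed K] [CharZero K]
    {V : Type uV} [AddCommGroup V] [Module K V] [FiniteDimensional K V]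
    (br : V →ₗ[K] V →ₗ[K] V)
    (leibniz : ∀ a b c : V, br a (br b c) = br (br a b) c + br b (br a c))
    (hsolv : ∃ m, derSeries br m = ⊥) :
    lcsIn br (bracketSpan br ⊤ ⊤) (finrank K V) = ⊥ := by
  classical
  set g : Submodule K (Module.End K V) := LinearMap.range br with hg
  have hcomm : ∀ a b : V, commB K V (br a) (br b) = br (br a b) := by
    intro a b
    apply LinearMap.ext
    intro c
    show br a (br b c) - br b (br a c) = br (br a b) c
    rw [leibniz a b c]
    abel
  have hcl : ∀ f ∈ g, ∀ f' ∈ g, f * f' - f' * f ∈ g := by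
    rintro f ⟨a, rfl⟩ f' ⟨b, rfl⟩
    refine ⟨br a b, ?_⟩
    have := hcomm a b
    rw [commB_apply] at this
    exact this.symm
  have hder : ∀ k, derFrom (commB K V) g k ≤ Submodule.map br (derSeries br k) := by
    intro k
    induction k with
    | zero =>
      show g ≤ Submodule.map br ⊤
      rw [Submodule.map_top]
    | succ k ihk =>
      show bracketSpan _ _ _ ≤ _
      refine le_trans (bracketSpan_mono ihk ihk) (bracketSpan_le.2 ?_)
      rintro F ⟨x, hx, rfl⟩ F' ⟨y, hy, rfl⟩
      rw [hcomm x y]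
      exact ⟨br x y, mem_bracketSpan hx hy, rfl⟩
  have hgsolv : ∃ m, derFrom (commB K V) g m = ⊥ := by
    obtain ⟨m, hm⟩ := hsolv
    refine ⟨m, le_bot_iff.1 ?_⟩
    refine le_trans (hder m) ?_
    rw [hm, Submodule.map_bot]
  obtain ⟨W, hW0, hWtop, hWmono, hWprop⟩ :=
    exists_flag (K := K) (finrank K V) V le_rfl g hcl hgsolv
  -- each W i is invariant under g
  have hWinv : ∀ i, ∀ f ∈ g, ∀ v ∈ W i, f v ∈ W i := by
    intro i
    match i with
    | 0 =>
      intro f _ v hv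
      rw [hW0] at hv ⊢
      rw [(Submodule.mem_bot K).1 hv, map_zero]
      exact Submodule.zero_mem _
    | (i+1) =>
      intro f hf v hv
      obtain ⟨c, hc⟩ := hWprop i f hf
      have h1 : f v - c • v ∈ W i := hc v hv
      have h2 : f v = (f v - c • v) + c • v := by abel
      rw [h2]
      exact add_mem (hWmono i h1) (Submodule.smul_mem _ _ hv)
  -- commutators of g lower the flag
  have hcommW : ∀ i, ∀ F ∈ g, ∀ G ∈ g, ∀ v ∈ W (i + 1), (F * G - G * F) v ∈ W i := by
    intro i F hF G hG v hv
    obtain ⟨cF, hcF⟩ := hWprop i F hF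
    obtain ⟨cG, hcG⟩ := hWprop i G hG
    have h1 : F (G v) - cG • (cF • v) ∈ W i := by
      have e1 : F (G v - cG • v) ∈ W i := hWinv i F hF _ (hcG v hv)
      have e2 : cG • (F v - cF • v) ∈ W i := Submodule.smul_mem _ _ (hcF v hv)
      have : F (G v) - cG • (cF • v) = F (G v - cG • v) + cG • (F v - cF • v) := by
        rw [map_sub, map_smul, smul_sub]
        abel
      rw [this]
      exact add_mem e1 e2
    have h2 : G (F v) - cG • (cF • v) ∈ W i := by
      have e1 : G (F v - cF • v) ∈ W i := hWinv i G hG _ (hcF v hv)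
      have e2 : cF • (G v - cG • v) ∈ W i := Submodule.smul_mem _ _ (hcG v hv)
      have : G (F v) - cG • (cF • v) = G (F v - cF • v) + cF • (G v - cG • v) := by
        rw [map_sub, map_smul, smul_sub, smul_smul, smul_smul, mul_comm cF cG]
        abel
      rw [this]
      exact add_mem e1 e2
    have h3 : (F * G - G * F) v = (F (G v) - cG • (cF • v)) - (G (F v) - cG • (cF • v)) := by
      simp only [LinearMap.sub_apply, Module.End.mul_apply]
      abel
    rw [h3]
    exact sub_mem h1 h2
  -- derived subalgebra elements lower the flag
  have hD : ∀ i, ∀ x ∈ bracketSpan br (⊤ : Submodule K V) ⊤, ∀ v ∈ W (i + 1), br x v ∈ W i := by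
    intro i
    set S : Submodule K (Module.End K V) :=
      { carrier := {F | ∀ v ∈ W (i + 1), F v ∈ W i}
        add_mem' := by
          intro a b ha hb v hv
          rw [LinearMap.add_apply]
          exact add_mem (ha v hv) (hb v hv)
        zero_mem' := by
          intro v _
          rw [LinearMap.zero_apply]
          exact Submodule.zero_mem _
        smul_mem' := by
          intro c a ha v hv
          rw [LinearMap.smul_apply]
          exact Submodule.smul_mem _ _ (ha v hv) } with hS
    have hbrS : ∀ x ∈ bracketSpan br (⊤ : Submodule K V) ⊤, br x ∈ S := by
      intro x hx
      induction hx using Submodule.span_induction with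
      | mem z hz =>
        obtain ⟨a, _, b, _, rfl⟩ := hz
        rw [← hcomm a b]
        intro v hv
        exact hcommW i (br a) ⟨a, rfl⟩ (br b) ⟨b, rfl⟩ v hv
      | zero =>
        rw [map_zero]
        exact S.zero_mem
      | add a b _ _ ha hb =>
        rw [map_add]
        exact S.add_mem ha hb
      | smul c a _ ha =>
        rw [map_smul]
        exact S.smul_mem c ha
    intro x hx v hv
    exact hbrS x hx v hv
  -- iterate down the flag
  have hmain : ∀ k, k ≤ finrank K V →
      lcsIn br (bracketSpan br ⊤ ⊤) k ≤ W (finrank K V - k) := by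
    intro k
    induction k with
    | zero =>
      intro _
      show bracketSpan br ⊤ ⊤ ≤ W (finrank K V)
      rw [hWtop]
      exact le_top
    | succ k ihk =>
      intro hk1
      show bracketSpan br (bracketSpan br ⊤ ⊤) (lcsIn br (bracketSpan br ⊤ ⊤) k) ≤ _
      refine bracketSpan_le.2 ?_
      intro a ha b hb
      have hb' : b ∈ W (finrank K V - k) := ihk (by omega) hb
      have heq : finrank K V - k = (finrank K V - (k + 1)) + 1 := by omega
      rw [heq] at hb'
      exact hD _ a ha b hb'
  have hfin := hmain (finrank K V) le_rfl
  rw [Nat.sub_self, hW0] at hfin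
  exact le_bot_iff.1 hfin

end EndAlg

section BaseChange

open TensorProduct

variable {K : Type*} [Field K] {A : Type*} [AddCommGroup A] [Module K A]
variable (L : Type*) [Field L] [Algebra K L]

/-- Base change of a bilinear multiplication. -/
noncomputable def brBC (br : A →ₗ[K] A →ₗ[K] A) :
    (L ⊗[K] A) →ₗ[L] (L ⊗[K] A) →ₗ[L] (L ⊗[K] A) :=
  LinearMap.liftBaseChange L ((LinearMap.baseChangeHom K L A A).comp br)

theorem brBC_tmul (br : A →ₗ[K] A →ₗ[K] A) (c d : L) (a b : A) :
    brBC L br (c ⊗ₜ a) (d ⊗ₜ b) = (c * d) ⊗ₜ br a b := by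
  unfold brBC
  rw [LinearMap.liftBaseChange_tmul]
  simp only [LinearMap.comp_apply, LinearMap.baseChangeHom, LinearMap.coe_mk, AddHom.coe_mk,
    LinearMap.smul_apply, LinearMap.baseChange_tmul]
  rw [smul_tmul', smul_eq_mul]

theorem brBC_leibniz (br : A →ₗ[K] A →ₗ[K] A)
    (leibniz : ∀ a b c : A, br a (br b c) = br (br a b) c + br b (br a c)) :
    ∀ x y z : L ⊗[K] A, brBC L br x (brBC L br y z) =
      brBC L br (brBC L br x y) z + brBC L br y (brBC L br x z) := by
  intro x y z
  induction x using TensorProduct.induction_on with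
  | zero => simp
  | add x₁ x₂ hx₁ hx₂ =>
    simp only [map_add, LinearMap.add_apply] at hx₁ hx₂ ⊢
    rw [hx₁, hx₂]
    abel
  | tmul c a =>
    induction y using TensorProduct.induction_on with
    | zero => simp
    | add y₁ y₂ hy₁ hy₂ =>
      simp only [map_add, LinearMap.add_apply] at hy₁ hy₂ ⊢
      rw [hy₁, hy₂]
      abel
    | tmul d b =>
      induction z using TensorProduct.induction_on with
      | zero => simp
      | add z₁ z₂ hz₁ hz₂ =>
        simp only [map_add] at hz₁ hz₂ ⊢
        rw [hz₁, hz₂]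
        abel
      | tmul e f =>
        simp only [brBC_tmul]
        rw [leibniz a b f, tmul_add,
          show (c * d) * e = c * (d * e) by ring, show d * (c * e) = c * (d * e) by ring]

theorem bracketSpan_baseChange_le (br : A →ₗ[K] A →ₗ[K] A) (p q : Submodule K A) :
    bracketSpan (brBC L br) (p.baseChange L) (q.baseChange L) ≤
      (bracketSpan br p q).baseChange L := by
  refine bracketSpan_le.2 ?_
  intro a ha b hb
  rw [Submodule.baseChange_eq_span] at ha hb
  induction ha using Submodule.span_induction with
  | mem z hz =>
    obtain ⟨m, hm, rfl⟩ := hz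
    induction hb using Submodule.span_induction with
    | mem z' hz' =>
      obtain ⟨m', hm', rfl⟩ := hz'
      show brBC L br ((1 : L) ⊗ₜ m) ((1 : L) ⊗ₜ m') ∈ _
      rw [brBC_tmul]
      exact Submodule.tmul_mem_baseChange_of_mem _ (mem_bracketSpan hm hm')
    | zero => rw [map_zero]; exact zero_mem _
    | add b₁ b₂ _ _ h₁ h₂ => rw [map_add]; exact add_mem h₁ h₂
    | smul c b' _ h => rw [map_smul]; exact Submodule.smul_mem _ _ h
  | zero => rw [map_zero, LinearMap.zero_apply]; exact zero_mem _
  | add a₁ a₂ _ _ h₁ h₂ => rw [map_add, LinearMap.add_apply]; exact add_mem h₁ h₂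
  | smul c a' _ h => rw [map_smul, LinearMap.smul_apply]; exact Submodule.smul_mem _ _ h

theorem derSeries_baseChange_le (br : A →ₗ[K] A →ₗ[K] A) :
    ∀ k, derSeries (brBC L br) k ≤ (derSeries br k).baseChange L := by
  intro k
  induction k with
  | zero =>
    show ⊤ ≤ (⊤ : Submodule K A).baseChange L
    rw [Submodule.baseChange_top]
  | succ k ih =>
    show bracketSpan _ _ _ ≤ _
    exact le_trans (bracketSpan_mono ih ih) (bracketSpan_baseChange_le L br _ _)

theorem lcsIn_baseChange (br : A →ₗ[K] A →ₗ[K] A) :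
    ∀ k, ∀ x ∈ lcsIn br (bracketSpan br ⊤ ⊤) k,
      TensorProduct.mk K L A 1 x ∈
        lcsIn (brBC L br) (bracketSpan (brBC L br) ⊤ ⊤) k := by
  have hsm : ∀ (c : K) (v : L ⊗[K] A) (S : Submodule L (L ⊗[K] A)), v ∈ S → c • v ∈ S := by
    intro c v S hv
    rw [← algebraMap_smul L c v]
    exact Submodule.smul_mem _ _ hv
  have hD : ∀ x ∈ bracketSpan br (⊤ : Submodule K A) ⊤,
      TensorProduct.mk K L A 1 x ∈ bracketSpan (brBC L br) (⊤ : Submodule L (L ⊗[K] A)) ⊤ := by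
    intro x hx
    induction hx using Submodule.span_induction with
    | mem z hz =>
      obtain ⟨a, _, b, _, rfl⟩ := hz
      show (1 : L) ⊗ₜ br a b ∈ _
      have : (1 : L) ⊗ₜ[K] br a b = brBC L br ((1 : L) ⊗ₜ a) ((1 : L) ⊗ₜ b) := by
        rw [brBC_tmul, one_mul]
      rw [this]
      exact mem_bracketSpan trivial trivial
    | zero => rw [map_zero]; exact zero_mem _
    | add a b _ _ ha hb => rw [map_add]; exact add_mem ha hb
    | smul c a _ ha => rw [map_smul]; exact hsm c _ _ ha
  intro k
  induction k with
  | zero => exact hD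
  | succ k ih =>
    intro x hx
    induction hx using Submodule.span_induction with
    | mem z hz =>
      obtain ⟨a, ha, b, hb, rfl⟩ := hz
      show (1 : L) ⊗ₜ br a b ∈ _
      have : (1 : L) ⊗ₜ[K] br a b = brBC L br ((1 : L) ⊗ₜ a) ((1 : L) ⊗ₜ b) := by
        rw [brBC_tmul, one_mul]
      rw [this]
      exact mem_bracketSpan (hD a ha) (ih b hb)
    | zero => rw [map_zero]; exact zero_mem _
    | add a b _ _ ha hb => rw [map_add]; exact add_mem ha hb
    | smul c a _ ha => rw [map_smul]; exact hsm c _ _ ha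

theorem tmul_one_injective : Function.Injective (TensorProduct.mk K L A 1) := by
  obtain ⟨f, hf⟩ := exists_dual_eq_one (K := K) (Q := L) (one_ne_zero)
  set r : (L ⊗[K] A) →ₗ[K] A := TensorProduct.lift ((LinearMap.lsmul K A).comp f) with hr
  have hretr : ∀ a : A, r (TensorProduct.mk K L A 1 a) = a := by
    intro a
    show TensorProduct.lift ((LinearMap.lsmul K A).comp f) ((1 : L) ⊗ₜ a) = a
    rw [TensorProduct.lift.tmul]
    simp [hf]
  intro a b hab
  have := congrArg r hab
  rwa [hretr, hretr] at this

end BaseChange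

end LeibnizAux

open LeibnizAux in
/-- a finite-dimensional (left) Leibniz algebra over a field of
characteristic zero is solvable iff its derived subalgebra `[A, A]` is nilpotent. -/
theorem leibniz_solvable_iff_derived_nilpotent
    {K A : Type*} [Field K] [CharZero K]
    [AddCommGroup A] [Module K A] [FiniteDimensional K A]
    (br : A →ₗ[K] A →ₗ[K] A)
    (leibniz : ∀ a b c : A, br a (br b c) = br (br a b) c + br b (br a c)) :
    (∃ m : ℕ, derSeries br m = ⊥) ↔
      ∃ m : ℕ, lcsIn br (bracketSpan br (⊤ : Submodule K A) ⊤) m = ⊥ := by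
  constructor
  · intro hsolv
    set L := AlgebraicClosure K with hL
    haveI : CharZero L := charZero_of_injective_algebraMap (algebraMap K L).injective
    haveI : Module.Finite L (TensorProduct K L A) := Module.Finite.base_change K L A
    have hsolv' : ∃ m, derSeries (brBC L br) m = ⊥ := by
      obtain ⟨m, hm⟩ := hsolv
      refine ⟨m, le_bot_iff.1 ?_⟩
      refine le_trans (derSeries_baseChange_le L br m) ?_
      rw [hm, Submodule.baseChange_bot]
    have hmain := lcsIn_eq_bot_of_solvable_algClosed (brBC L br)
      (brBC_leibniz L br leibniz) hsolv'
    refine ⟨finrank L (TensorProduct K L A), ?_⟩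
    rw [Submodule.eq_bot_iff]
    intro x hx
    have h1 := lcsIn_baseChange L br _ x hx
    rw [hmain] at h1
    have h2 : TensorProduct.mk K L A 1 x = 0 := (Submodule.mem_bot L).1 h1
    have h3 : TensorProduct.mk K L A 1 x = TensorProduct.mk K L A 1 0 := by
      rw [h2, map_zero]
    exact tmul_one_injective L h3
  · rintro ⟨m, hm⟩
    refine ⟨m + 1, le_bot_iff.1 ?_⟩
    exact le_trans (derSeries_le_lcsIn m) (le_of_eq hm)
end

section
/- Let A be a finite-dimensional (left) Leibniz algebra over a field, let L be a Lie subset of A that spans A, and let M be a nonzero finite-dimensional A-module with associated representation (T, S). Suppose that T_a is a nilpotent operator for every a ∈ L. Then A acts nilpotently on M (there exists n such that every composition of n operators, each of the form T_a or S_a with a ∈ A, is zero), and there exists a nonzero m ∈ M such that [a,m] = 0 = [m,a] for all a ∈ A. -/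
namespace LeibnizEngelAux

open Submodule Module

variable {K E : Type*} [Field K] [Ring E] [Algebra K E]

lemma zle (q : Submodule K E) : (0 : Submodule K E) ≤ q := by
  rw [Submodule.zero_eq_bot]; exact bot_le

lemma sum_le' {ι : Type*} (s : Finset ι) (f : ι → Submodule K E) (C : Submodule K E)
    (h : ∀ i ∈ s, f i ≤ C) : (∑ i ∈ s, f i) ≤ C := by
  refine Finset.sum_induction f (fun q => q ≤ C) (fun a b ha hb => ?_) ?_ h
  · rw [Submodule.add_eq_sup]; exact sup_le ha hb
  · rw [Submodule.zero_eq_bot]; exact bot_le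

lemma pow_mono {p q : Submodule K E} (h : p ≤ q) : ∀ n, p ^ n ≤ q ^ n
  | 0 => le_rfl
  | n+1 => by rw [pow_succ, pow_succ]; exact mul_le_mul' (pow_mono h n) h

lemma pow_bot_of_le {p : Submodule K E} {k j : ℕ} (hk : p ^ k = ⊥) (h : k ≤ j) : p ^ j = ⊥ := by
  have he : p ^ j = p ^ k * p ^ (j - k) := by rw [← pow_add, Nat.add_sub_cancel' h]
  rw [he, hk, Submodule.bot_mul]

lemma mul_sup' (p q r : Submodule K E) : p * (q ⊔ r) = p * q ⊔ p * r := by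
  rw [← Submodule.add_eq_sup, ← Submodule.add_eq_sup (p*q), mul_add]

lemma sup_mul' (p q r : Submodule K E) : (p ⊔ q) * r = p * r ⊔ q * r := by
  rw [← Submodule.add_eq_sup, ← Submodule.add_eq_sup (p*r), add_mul]

lemma span_singleton_pow' (x : E) : ∀ n : ℕ, (span K {x}) ^ (n+1) = span K {x ^ (n+1)}
  | 0 => by simp
  | n+1 => by
      rw [pow_succ, span_singleton_pow' x n, Submodule.span_mul_span,
        Set.singleton_mul_singleton, ← pow_succ]

lemma list_prod_mem_pow (P : Submodule K E) : ∀ l : List E, (∀ x ∈ l, x ∈ P) → l.prod ∈ P ^ l.length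
  | [], _ => by
      simp only [List.prod_nil, List.length_nil, pow_zero, Submodule.one_eq_span]
      exact Submodule.mem_span_singleton_self 1
  | a :: l, h => by
      rw [List.prod_cons, List.length_cons, pow_succ']
      exact Submodule.mul_mem_mul (h a (List.mem_cons_self))
        (list_prod_mem_pow P l fun x hx => h x (List.mem_cons_of_mem _ hx))

/-- Jacobson's refinement of Engel's theorem (associative form): if `W` is a set of
nilpotent elements of a finite-dimensional algebra closed under commutators, then
the (non-unital) algebra generated by `W` is nilpotent. -/
theorem jacobson [FiniteDimensional K E] :
    ∀ (d : ℕ) (W : Set E), (∀ x ∈ W, ∀ y ∈ W, x * y - y * x ∈ W) →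
      (∀ x ∈ W, IsNilpotent x) → finrank K (span K W) ≤ d →
      ∃ N, 0 < N ∧ span K W ^ N = ⊥ := by
  intro d
  induction d with
  | zero =>
      intro W _ _ h0
      refine ⟨1, one_pos, ?_⟩
      rw [pow_one, Submodule.finrank_eq_zero.mp (Nat.le_zero.mp h0)]
  | succ d ih =>
      intro W hcl hnil hrank
      by_cases hWbot : span K W = ⊥
      · exact ⟨1, one_pos, by rw [pow_one, hWbot]⟩
      -- choose a Lie-closed subset of maximal rank among those with strictly smaller span
      set ℛ : Set ℕ := {r | ∃ W' : Set E, W' ⊆ W ∧ (∀ x ∈ W', ∀ y ∈ W', x * y - y * x ∈ W') ∧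
          span K W' < span K W ∧ finrank K (span K W') = r} with hℛ
      have hne : ℛ.Nonempty := by
        refine ⟨finrank K (span K (∅ : Set E)), ∅, by simp, by simp, ?_, rfl⟩
        rw [Submodule.span_empty]
        exact bot_lt_iff_ne_bot.mpr hWbot
      have hbdd : BddAbove ℛ := by
        refine ⟨finrank K (span K W), ?_⟩
        rintro r ⟨W', _, _, hlt, rfl⟩
        exact Submodule.finrank_mono hlt.le
      obtain ⟨W', hW'W, hcl', hlt, hfr⟩ := Nat.sSup_mem hne hbdd
      have hnil' : ∀ x ∈ W', IsNilpotent x := fun x hx => hnil x (hW'W hx)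
      have hrank' : finrank K (span K W') ≤ d := by
        have h1 : finrank K (span K W') < finrank K (span K W) :=
          Submodule.finrank_lt_finrank_of_lt hlt
        omega
      obtain ⟨k, hk0, hkbot⟩ := ih W' hcl' hnil' hrank'
      set p : Submodule K E := span K W' with hp
      set B : Submodule K E := ∑ j ∈ Finset.range k, p ^ (j+1) with hB
      have hpB : p ≤ B := by
        have h1 : p ^ (0+1) ≤ B :=
          Finset.single_le_sum (f := fun j => p ^ (j+1)) (fun i _ => zle _)
            (Finset.mem_range.mpr hk0)
        simpa using h1
      have hple : ∀ j, 1 ≤ j → p ^ j ≤ B := by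
        intro j hj
        rcases le_or_gt j k with h | h
        · have h1 : p ^ ((j-1)+1) ≤ ∑ i ∈ Finset.range k, p ^ (i+1) :=
            Finset.single_le_sum (f := fun i => p ^ (i+1)) (fun i _ => zle _)
              (Finset.mem_range.mpr (show j - 1 < k by omega))
          rw [Nat.sub_add_cancel hj] at h1
          rw [hB]; exact h1
        · rw [pow_bot_of_le hkbot h.le]; exact bot_le
      have hBpow : ∀ j, B ^ (j+1) ≤ ∑ i ∈ Finset.range k, p ^ (i+j+1) := by
        intro j
        induction j with
        | zero => exact le_of_eq (pow_one B)
        | succ j ihj =>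
            rw [pow_succ]
            refine le_trans (mul_le_mul' ihj le_rfl) ?_
            rw [Finset.sum_mul]
            refine sum_le' _ _ _ ?_
            intro i _
            rw [hB, Finset.mul_sum]
            refine sum_le' _ _ _ ?_
            intro l _
            have he : p ^ (i+j+1) * p ^ (l+1) = p ^ ((i+l) + (j+1) + 1) := by
              rw [← pow_add]; congr 1; omega
            rw [he]
            rcases lt_or_ge (i+l) k with h | h
            · exact Finset.single_le_sum (f := fun i' => p ^ (i'+(j+1)+1)) (fun _ _ => zle _)
                (Finset.mem_range.mpr h)
            · rw [pow_bot_of_le hkbot (show k ≤ (i+l)+(j+1)+1 by omega)]; exact bot_le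
      have hBk : ∀ j, k ≤ j → B ^ j = ⊥ := by
        have hBkk : B ^ k = ⊥ := by
          have h1 : B ^ k ≤ ∑ i ∈ Finset.range k, p ^ (i + (k-1) + 1) := by
            have h2 := hBpow (k-1)
            rwa [Nat.sub_add_cancel hk0] at h2
          refine le_bot_iff.mp (le_trans h1 (sum_le' _ _ _ ?_))
          intro i _
          rw [pow_bot_of_le hkbot (show k ≤ i + (k-1) + 1 by omega)]
        intro j hj; exact pow_bot_of_le hBkk hj
      have hBBle : B * B ≤ B := by
        have h2 : B ^ (1+1) ≤ ∑ i ∈ Finset.range k, p ^ (i + 1 + 1) := hBpow 1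
        rw [pow_add, pow_one] at h2
        refine le_trans h2 (sum_le' _ _ _ ?_)
        intro i _
        exact hple _ (by omega)
      have hBBe : ∀ b ∈ B, ∀ c ∈ B, b * c ∈ B := fun b hb c hc =>
        hBBle (Submodule.mul_mem_mul hb hc)
      by_cases hWB : ∀ w ∈ W, w ∈ B
      · refine ⟨k, hk0, ?_⟩
        have h1 : span K W ≤ B := Submodule.span_le.mpr hWB
        exact le_bot_iff.mp (le_trans (pow_mono h1 k) (le_of_eq (hBk k le_rfl)))
      push_neg at hWB
      obtain ⟨w₀, hw₀W, hw₀B⟩ := hWB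
      -- iterated commutators by elements of B vanish after 2k steps
      have memD : ∀ l : List E, (∀ a ∈ l, a ∈ B) → ∀ x : E,
          l.foldr (fun a y => a * y - y * a) x ∈
            ∑ s ∈ Finset.range (l.length + 1), B ^ s * (span K {x} * B ^ (l.length - s)) := by
        intro l
        induction l with
        | nil =>
            intro _ x
            simp only [List.foldr_nil, List.length_nil, Nat.zero_add, Finset.range_one,
              Finset.sum_singleton, pow_zero, Nat.zero_sub, one_mul, mul_one]
            exact Submodule.mem_span_singleton_self x
        | cons a l ihl =>
            intro ha x
            have haB : a ∈ B := ha a (List.mem_cons_self)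
            have hy := ihl (fun b hb => ha b (List.mem_cons_of_mem _ hb)) x
            simp only [List.foldr_cons, List.length_cons]
            set j := l.length with hj
            set y := l.foldr (fun a y => a * y - y * a) x with hy'
            have hleft : B * (∑ s ∈ Finset.range (j+1), B ^ s * (span K {x} * B ^ (j - s))) ≤
                ∑ s ∈ Finset.range (j+1+1), B ^ s * (span K {x} * B ^ (j+1 - s)) := by
              rw [Finset.mul_sum]
              refine sum_le' _ _ _ ?_
              intro s hs
              have hs' : s ≤ j := Nat.lt_succ_iff.mp (Finset.mem_range.mp hs)
              have hee : j - s = j + 1 - (s+1) := by omega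
              have he : B * (B ^ s * (span K {x} * B ^ (j - s))) =
                  B ^ (s+1) * (span K {x} * B ^ (j + 1 - (s+1))) := by
                rw [← mul_assoc, ← pow_succ', hee]
              rw [he]
              exact Finset.single_le_sum (f := fun s' => B ^ s' * (span K {x} * B ^ (j+1-s')))
                (fun _ _ => zle _) (Finset.mem_range.mpr (by omega))
            have hright : (∑ s ∈ Finset.range (j+1), B ^ s * (span K {x} * B ^ (j - s))) * B ≤
                ∑ s ∈ Finset.range (j+1+1), B ^ s * (span K {x} * B ^ (j+1 - s)) := by
              rw [Finset.sum_mul]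
              refine sum_le' _ _ _ ?_
              intro s hs
              have hs' : s ≤ j := Nat.lt_succ_iff.mp (Finset.mem_range.mp hs)
              have hee : (j - s) + 1 = j + 1 - s := by omega
              have he : (B ^ s * (span K {x} * B ^ (j - s))) * B =
                  B ^ s * (span K {x} * B ^ (j + 1 - s)) := by
                rw [mul_assoc, mul_assoc, ← pow_succ, hee]
              rw [he]
              exact Finset.single_le_sum (f := fun s' => B ^ s' * (span K {x} * B ^ (j+1-s')))
                (fun _ _ => zle _) (Finset.mem_range.mpr (by omega))
            exact sub_mem (hleft (Submodule.mul_mem_mul haB hy))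
              (hright (Submodule.mul_mem_mul hy haB))
      have hchain0 : ∀ l : List E, (∀ a ∈ l, a ∈ B) → l.length = 2*k → ∀ x : E,
          l.foldr (fun a y => a * y - y * a) x = 0 := by
        intro l hl hlen x
        have h1 := memD l hl x
        rw [hlen] at h1
        have h2 : (∑ s ∈ Finset.range (2*k+1), B ^ s * (span K {x} * B ^ (2*k - s))) ≤ ⊥ := by
          refine sum_le' _ _ _ ?_
          intro s _
          rcases le_or_gt k s with h | h
          · rw [hBk s h, Submodule.bot_mul]
          · rw [hBk (2*k - s) (by omega), Submodule.mul_bot, Submodule.mul_bot]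
        simpa using h2 h1
      have hW'B : ∀ w' ∈ W', w' ∈ B := fun w' hw' => hpB (Submodule.subset_span hw')
      -- find an element outside B whose commutators with W' lie in B
      have find : ∀ c : ℕ, ∀ w, w ∈ W → w ∉ B →
          (∀ l : List E, (∀ a ∈ l, a ∈ W') → l.length = c →
            l.foldr (fun a y => a * y - y * a) w ∈ B) →
          ∃ ws, ws ∈ W ∧ ws ∉ B ∧ ∀ w' ∈ W', w' * ws - ws * w' ∈ B := by
        intro c
        induction c with
        | zero =>
            intro w hwW hwB hch
            exact absurd (hch [] (by simp) rfl) hwB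
        | succ c ihc =>
            intro w hwW hwB hch
            by_cases hall : ∀ w' ∈ W', w' * w - w * w' ∈ B
            · exact ⟨w, hwW, hwB, hall⟩
            · push_neg at hall
              obtain ⟨w', hw'W', hw'B⟩ := hall
              refine ihc (w' * w - w * w') (hcl w' (hW'W hw'W') w hwW) hw'B ?_
              intro l hl hlen
              have h3 := hch (l ++ [w']) ?_ (by simp [hlen])
              · rwa [List.foldr_append, List.foldr_cons, List.foldr_nil] at h3
              · intro b hbb
                rcases List.mem_append.mp hbb with h | h
                · exact hl b h
                · rw [List.mem_singleton] at h
                  rw [h]; exact hw'W'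
      obtain ⟨ws, hwsW, hwsB, hwscomm⟩ := find (2*k) w₀ hw₀W hw₀B
        (fun l hl hlen => by
          rw [hchain0 l (fun a ha => hW'B a (hl a ha)) hlen w₀]
          exact zero_mem B)
      obtain ⟨m0, hm0⟩ := hnil ws hwsW
      set m : ℕ := m0 + 1 with hm
      have hwsm : ws ^ m = 0 := by rw [hm, pow_succ, hm0, zero_mul]
      set q : Submodule K E := span K {ws} with hq
      have hqm : q ^ m = ⊥ := by
        rw [hq, hm, span_singleton_pow', ← hm, hwsm]
        exact Submodule.span_zero_singleton K
      -- commutators of B with ws lie in B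
      have hBcomm : ∀ b ∈ B, b * ws - ws * b ∈ B := by
        have h1 : ∀ b ∈ p, b * ws - ws * b ∈ B := by
          intro b hb
          refine Submodule.span_induction (fun x hx => hwscomm x hx) (by simp)
            ?_ ?_ hb
          · intro x y _ _ hx hy
            have he : (x + y) * ws - ws * (x + y) = (x * ws - ws * x) + (y * ws - ws * y) := by
              noncomm_ring
            rw [he]; exact add_mem hx hy
          · intro c x _ hx
            have he : (c • x) * ws - ws * (c • x) = c • (x * ws - ws * x) := by
              rw [smul_mul_assoc, mul_smul_comm, smul_sub]
            rw [he]; exact Submodule.smul_mem _ _ hx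
        have h2 : ∀ j, ∀ b ∈ p ^ (j+1), b * ws - ws * b ∈ B := by
          intro j
          induction j with
          | zero => intro b hb; exact h1 b (by rwa [pow_one] at hb)
          | succ j ihj =>
              intro b hb
              rw [pow_succ] at hb
              refine Submodule.mul_induction_on hb ?_ ?_
              · intro x hx y hy
                have hxB : x ∈ B := hple (j+1) (by omega) hx
                have hyB : y ∈ B := hpB hy
                have he : (x * y) * ws - ws * (x * y) =
                    x * (y * ws - ws * y) + (x * ws - ws * x) * y := by noncomm_ring
                rw [he]
                exact add_mem (hBBe x hxB _ (h1 y hy)) (hBBe _ (ihj x hx) y hyB)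
              · intro x y hx hy
                have he : (x + y) * ws - ws * (x + y) = (x*ws - ws*x) + (y*ws - ws*y) := by noncomm_ring
                rw [he]; exact add_mem hx hy
        intro b hb
        have hle : B ≤ Submodule.comap (LinearMap.mulRight K ws - LinearMap.mulLeft K ws) B := by
          rw [hB]
          refine sum_le' _ _ _ ?_
          intro j _
          intro b' hb'
          simp only [Submodule.mem_comap, LinearMap.sub_apply, LinearMap.mulRight_apply,
            LinearMap.mulLeft_apply]
          exact h2 j b' hb'
        have h3 := hle hb
        simpa only [Submodule.mem_comap, LinearMap.sub_apply, LinearMap.mulRight_apply,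
          LinearMap.mulLeft_apply] using h3
      set A2 : Submodule K E := B ⊔ q with hA2
      have hwsq : ws ∈ q := Submodule.mem_span_singleton_self ws
      set W2 : Set E := {x | x ∈ W ∧ x ∈ A2} with hW2
      have hW2cl : ∀ x ∈ W2, ∀ y ∈ W2, x * y - y * x ∈ W2 := by
        rintro x ⟨hxW, hxA⟩ y ⟨hyW, hyA⟩
        refine ⟨hcl x hxW y hyW, ?_⟩
        obtain ⟨bx, hbx, zx, hzx, rfl⟩ := Submodule.mem_sup.mp hxA
        obtain ⟨by', hby, zy, hzy, rfl⟩ := Submodule.mem_sup.mp hyA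
        obtain ⟨cx, rfl⟩ := Submodule.mem_span_singleton.mp hzx
        obtain ⟨cy, rfl⟩ := Submodule.mem_span_singleton.mp hzy
        have hexp : (bx + cx • ws) * (by' + cy • ws) - (by' + cy • ws) * (bx + cx • ws)
            = (bx * by' - by' * bx) + (cy • (bx * ws - ws * bx) - cx • (by' * ws - ws * by')) := by
          simp only [add_mul, mul_add, smul_mul_assoc, mul_smul_comm, smul_sub, smul_smul,
            smul_add]
          rw [mul_comm cy cx]
          abel
        rw [hexp]
        refine Submodule.mem_sup_left (add_mem (sub_mem (hBBe _ hbx _ hby) (hBBe _ hby _ hbx))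
          (sub_mem (Submodule.smul_mem _ _ (hBcomm _ hbx)) (Submodule.smul_mem _ _ (hBcomm _ hby))))
      have hspanW2 : span K W2 = span K W := by
        by_contra hne2
        have hlt2 : span K W2 < span K W :=
          lt_of_le_of_ne (Submodule.span_mono (fun x hx => hx.1)) hne2
        have hmem : finrank K (span K W2) ∈ ℛ := ⟨W2, fun x hx => hx.1, hW2cl, hlt2, rfl⟩
        have hle2 : finrank K (span K W2) ≤ sSup ℛ := le_csSup hbdd hmem
        have hpq : p < span K W2 := by
          have hsub : W' ⊆ W2 := fun x hx =>
            ⟨hW'W hx, Submodule.mem_sup_left (hpB (Submodule.subset_span hx))⟩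
          have h1 : p ≤ span K W2 := Submodule.span_mono hsub
          have h2 : ws ∈ span K W2 :=
            Submodule.subset_span ⟨hwsW, Submodule.mem_sup_right hwsq⟩
          refine lt_of_le_of_ne h1 ?_
          intro heq
          exact hwsB (hpB (by rw [heq]; exact h2))
        have h3 : finrank K p < finrank K (span K W2) :=
          Submodule.finrank_lt_finrank_of_lt hpq
        rw [hfr] at h3
        omega
      have hWA2 : span K W ≤ A2 := by
        rw [← hspanW2]
        exact Submodule.span_le.mpr (fun x hx => hx.2)
      -- the subalgebra generated by A2
      set Aa : Submodule K E := Subalgebra.toSubmodule (Algebra.adjoin K (A2 : Set E)) with hAa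
      have hA2Aa : A2 ≤ Aa := fun x hx => Algebra.subset_adjoin hx
      have hAamul : Aa * Aa ≤ Aa := by
        rw [Submodule.mul_le]
        intro x hx y hy
        rw [hAa, Subalgebra.mem_toSubmodule] at hx hy ⊢
        exact mul_mem hx hy
      have hBAa : B ≤ Aa := le_trans le_sup_left hA2Aa
      have hqAa : q ≤ Aa := le_trans le_sup_right hA2Aa
      have hwsAa : ws ∈ Aa := hqAa hwsq
      have hAaB : ∀ x ∈ Aa, ∀ b ∈ B, x * b ∈ B * Aa ⊔ B := by
        intro x hx
        rw [hAa, Subalgebra.mem_toSubmodule] at hx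
        induction hx using Algebra.adjoin_induction with
        | mem z hz =>
            intro b hb
            obtain ⟨bz, hbz, yz, hyz, rfl⟩ := Submodule.mem_sup.mp hz
            obtain ⟨c, rfl⟩ := Submodule.mem_span_singleton.mp hyz
            have h1 : bz * b ∈ B := hBBe bz hbz b hb
            have h3 : ws * b ∈ B * Aa ⊔ B := by
              have h2 : ws * b = b * ws - (b * ws - ws * b) := by noncomm_ring
              rw [h2]
              exact sub_mem (Submodule.mem_sup_left (Submodule.mul_mem_mul hb hwsAa))
                (Submodule.mem_sup_right (hBcomm b hb))
            have he : (bz + c • ws) * b = bz * b + c • (ws * b) := by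
              rw [add_mul, smul_mul_assoc]
            rw [he]
            exact add_mem (Submodule.mem_sup_right h1) (Submodule.smul_mem _ _ h3)
        | algebraMap r =>
            intro b hb
            have he : (algebraMap K E r) * b = r • b := by rw [Algebra.smul_def]
            rw [he]
            exact Submodule.mem_sup_right (Submodule.smul_mem _ _ hb)
        | add z w hz hw ihz ihw =>
            intro b hb
            rw [add_mul]
            exact add_mem (ihz b hb) (ihw b hb)
        | mul z w hz hw ihz ihw =>
            intro b hb
            rw [mul_assoc]
            have h4 := ihw b hb
            have hz' : ∀ u ∈ (B * Aa : Submodule K E), z * u ∈ B * Aa ⊔ B := by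
              intro u hu
              refine Submodule.mul_induction_on hu ?_ ?_
              · intro b1 hb1 y1 hy1
                rw [← mul_assoc]
                have h5 := ihz b1 hb1
                obtain ⟨u', hu', v', hv', huv'⟩ := Submodule.mem_sup.mp h5
                rw [← huv', add_mul]
                refine add_mem ?_ (Submodule.mem_sup_left (Submodule.mul_mem_mul hv' hy1))
                refine Submodule.mem_sup_left ?_
                have h6 : u' * y1 ∈ (B * Aa) * Aa := Submodule.mul_mem_mul hu' hy1
                have hle : (B * Aa) * Aa ≤ B * Aa := by
                  rw [mul_assoc]; exact mul_le_mul' le_rfl hAamul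
                exact hle h6
              · intro u1 u2 hh1 hh2
                rw [mul_add]; exact add_mem hh1 hh2
            obtain ⟨u, hu, v, hv, huv⟩ := Submodule.mem_sup.mp h4
            rw [← huv, mul_add]
            exact add_mem (hz' u hu) (ihz v hv)
      have hAaBle : Aa * B ≤ B * Aa ⊔ B := by
        rw [Submodule.mul_le]; exact fun x hx b hb => hAaB x hx b hb
      set I : Submodule K E := B ⊔ B * Aa with hI
      have hIAa : I ≤ Aa := sup_le hBAa (le_trans (mul_le_mul' hBAa le_rfl) hAamul)
      have hIAar : I * Aa ≤ I := by
        rw [hI, sup_mul']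
        refine sup_le le_sup_right ?_
        rw [mul_assoc]
        exact le_trans (mul_le_mul' le_rfl hAamul) le_sup_right
      have hBAa2 : Aa * (B * Aa) ≤ B * Aa := by
        rw [← mul_assoc]
        refine le_trans (mul_le_mul' hAaBle le_rfl) ?_
        rw [sup_mul']
        refine sup_le ?_ le_rfl
        rw [mul_assoc]
        exact mul_le_mul' le_rfl hAamul
      have hAaI : Aa * I ≤ I := by
        rw [hI, mul_sup']
        refine sup_le (le_trans hAaBle (sup_le le_sup_right le_sup_left)) ?_
        exact le_trans hBAa2 le_sup_right
      have hIpow : ∀ j, I ^ (j+1) ≤ B ^ (j+1) ⊔ B ^ (j+1) * Aa := by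
        intro j
        induction j with
        | zero => rw [pow_one, pow_one]
        | succ j ihj =>
            rw [pow_succ]
            refine le_trans (mul_le_mul' ihj le_rfl) ?_
            rw [hI, sup_mul']
            refine sup_le ?_ ?_
            · rw [mul_sup']
              refine sup_le ?_ ?_
              · rw [← pow_succ]; exact le_sup_left
              · rw [← mul_assoc, ← pow_succ]; exact le_sup_right
            · rw [mul_sup']
              refine sup_le ?_ ?_
              · rw [mul_assoc]
                refine le_trans (mul_le_mul' le_rfl hAaBle) ?_
                rw [mul_sup']
                refine sup_le ?_ ?_
                · rw [← mul_assoc, ← pow_succ]; exact le_sup_right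
                · rw [← pow_succ]; exact le_sup_left
              · rw [mul_assoc]
                refine le_trans (mul_le_mul' le_rfl hBAa2) ?_
                rw [← mul_assoc, ← pow_succ]
                exact le_sup_right
      have hIk : I ^ k = ⊥ := by
        have h1 : I ^ ((k-1)+1) ≤ B ^ ((k-1)+1) ⊔ B ^ ((k-1)+1) * Aa := hIpow (k-1)
        rw [Nat.sub_add_cancel hk0] at h1
        rw [hBk k le_rfl, Submodule.bot_mul, sup_bot_eq] at h1
        exact le_bot_iff.mp h1
      have hAapow : ∀ j, Aa ^ (j+1) ≤ Aa := by
        intro j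
        induction j with
        | zero => rw [pow_one]
        | succ j ihj =>
            rw [pow_succ]
            exact le_trans (mul_le_mul' ihj le_rfl) hAamul
      have hIq : ∀ j, (I ⊔ q) ^ (j+1) ≤ I ⊔ q ^ (j+1) := by
        intro j
        induction j with
        | zero => rw [pow_one, pow_one]
        | succ j ihj =>
            rw [pow_succ]
            refine le_trans (mul_le_mul' ihj le_rfl) ?_
            rw [sup_mul']
            refine sup_le ?_ ?_
            · rw [mul_sup']
              refine sup_le ?_ ?_
              · exact le_trans (le_trans (mul_le_mul' hIAa le_rfl) hAaI) le_sup_left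
              · exact le_trans (mul_le_mul' le_rfl hqAa) (le_trans hIAar le_sup_left)
            · rw [mul_sup']
              refine sup_le ?_ ?_
              · refine le_trans (mul_le_mul' (le_trans (pow_mono hqAa (j+1)) (hAapow j)) le_rfl) ?_
                exact le_trans hAaI le_sup_left
              · rw [← pow_succ]; exact le_sup_right
      have hA2I : A2 ^ m ≤ I := by
        have h1 : A2 ≤ I ⊔ q := sup_le (le_trans le_sup_left le_sup_left) le_sup_right
        have h2 : A2 ^ m ≤ (I ⊔ q) ^ m := pow_mono h1 m
        rw [hm] at h2 ⊢
        refine le_trans h2 (le_trans (hIq m0) ?_)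
        rw [← hm, hqm]  -- careful: q ^ (m0+1) = q ^ m
        exact sup_le le_rfl bot_le
      refine ⟨m * k, by positivity, ?_⟩
      have h1 : span K W ^ (m * k) ≤ A2 ^ (m * k) := pow_mono hWA2 _
      have h2 : A2 ^ (m * k) ≤ I ^ k := by
        rw [pow_mul]
        exact pow_mono hA2I k
      rw [hIk] at h2
      exact le_bot_iff.mp (le_trans h1 h2)

end LeibnizEngelAux


namespace LeibnizEngelAux
open Submodule Module
variable {K E : Type*} [Field K] [Ring E] [Algebra K E]

/-- A recursively defined power of a submodule, to avoid `Pow`-instance mismatches. -/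
def spow (P : Submodule K E) : ℕ → Submodule K E
  | 0 => 1
  | n+1 => P * spow P n

lemma spow_eq_pow (P : Submodule K E) : ∀ n, spow P n = P ^ n
  | 0 => by rw [pow_zero]; rfl
  | n+1 => by
      rw [show spow P (n+1) = P * spow P n from rfl, spow_eq_pow P n, ← pow_succ']

lemma one_mem_one' : (1 : E) ∈ (1 : Submodule K E) := by
  rw [Submodule.one_eq_span]
  exact Submodule.mem_span_singleton_self 1

lemma list_prod_mem_spow (P : Submodule K E) :
    ∀ l : List E, (∀ x ∈ l, x ∈ P) → l.prod ∈ spow P l.length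
  | [], _ => by
      rw [List.prod_nil, List.length_nil]
      exact one_mem_one'
  | a :: l, h => by
      rw [List.prod_cons, List.length_cons]
      exact Submodule.mul_mem_mul (h a (List.mem_cons_self))
        (list_prod_mem_spow P l fun x hx => h x (List.mem_cons_of_mem _ hx))

/-- The key submodule computation for part 1 of Engel's theorem for Leibniz modules. -/
lemma part1 (TR SR : Submodule K E) (N : ℕ) (hTbot : TR ^ N = ⊥)
    (h1le : SR * TR ≤ SR * SR) (h1le' : SR * SR ≤ SR * TR)
    (h2le : TR * SR ≤ SR * TR ⊔ SR) :
    spow (TR ⊔ SR) (N + N) = ⊥ := by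
  rw [spow_eq_pow]
  set P : Submodule K E := TR ⊔ SR with hP
  have SP : ∀ j, SR * P ^ j ≤ SR * TR ^ j := by
    intro j
    induction j with
    | zero => exact le_rfl
    | succ j ihj =>
        have hSP1 : SR * P ≤ SR * SR := by
          rw [hP, mul_sup']
          exact sup_le h1le le_rfl
        calc SR * P ^ (j+1) = (SR * P) * P ^ j := by rw [pow_succ', ← mul_assoc]
          _ ≤ (SR * SR) * P ^ j := mul_le_mul' hSP1 le_rfl
          _ = SR * (SR * P ^ j) := by rw [mul_assoc]
          _ ≤ SR * (SR * TR ^ j) := mul_le_mul' le_rfl ihj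
          _ = (SR * SR) * TR ^ j := by rw [mul_assoc]
          _ ≤ (SR * TR) * TR ^ j := mul_le_mul' h1le' le_rfl
          _ = SR * TR ^ (j+1) := by rw [mul_assoc, ← pow_succ']
  let Z : ℕ → Submodule K E := fun j => Nat.rec ⊥ (fun j' Zj => TR * Zj ⊔ SR * TR ^ j') j
  have hZs : ∀ j, Z (j+1) = TR * Z j ⊔ SR * TR ^ j := fun j => rfl
  have PZ : ∀ j, P ^ j ≤ TR ^ j ⊔ Z j := by
    intro j
    induction j with
    | zero => rw [pow_zero, pow_zero]; exact le_sup_left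
    | succ j ihj =>
        calc P ^ (j+1) = P * P ^ j := pow_succ' P j
          _ = TR * P ^ j ⊔ SR * P ^ j := by rw [hP, sup_mul']
          _ ≤ (TR * (TR ^ j ⊔ Z j)) ⊔ SR * TR ^ j :=
              sup_le (le_trans (mul_le_mul' le_rfl ihj) le_sup_left)
                (le_trans (SP j) le_sup_right)
          _ = (TR ^ (j+1) ⊔ TR * Z j) ⊔ SR * TR ^ j := by rw [mul_sup', ← pow_succ']
          _ ≤ TR ^ (j+1) ⊔ Z (j+1) := by
              rw [hZs]
              exact sup_le (sup_le le_sup_left (le_trans le_sup_left le_sup_right))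
                (le_trans le_sup_right le_sup_right)
  have hTj : ∀ j, N ≤ j → TR ^ j = ⊥ := fun j hj => pow_bot_of_le hTbot hj
  have ZT : ∀ t, Z (N + t) ≤ TR ^ t * Z N := by
    intro t
    induction t with
    | zero => rw [Nat.add_zero, pow_zero, one_mul]
    | succ t iht =>
        rw [show N + (t+1) = (N+t)+1 by omega, hZs, hTj (N+t) (by omega), Submodule.mul_bot]
        refine sup_le ?_ bot_le
        calc TR * Z (N+t) ≤ TR * (TR ^ t * Z N) := mul_le_mul' le_rfl iht
          _ = TR ^ (t+1) * Z N := by rw [← mul_assoc, ← pow_succ']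
  refine le_bot_iff.mp (le_trans (PZ (N+N)) (sup_le ?_ ?_))
  · rw [hTj (N+N) (by omega)]
  · refine le_trans (ZT N) ?_
    rw [hTj N le_rfl, Submodule.bot_mul]

end LeibnizEngelAux

open Submodule Module LeibnizEngelAux in
/-- Engel's theorem for modules: if a Lie subset `L` spanning `A` acts
by nilpotent operators `T_a` on a nonzero finite-dimensional module `M`, then `A`
acts nilpotently on `M` (every composition of `n` operators of the form `T_a` or
`S_a` vanishes, for some `n`) and some nonzero `m ∈ M` is annihilated by all
`T_a` and `S_a`. -/
theorem leibniz_engel_module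
    {K A M : Type*} [Field K]
    [AddCommGroup A] [Module K A] [FiniteDimensional K A]
    [AddCommGroup M] [Module K M] [FiniteDimensional K M] [Nontrivial M]
    (br : A →ₗ[K] A →ₗ[K] A)
    (leibniz : ∀ a b c : A, br a (br b c) = br (br a b) c + br b (br a c))
    (L : Set A)
    (hLclosed : ∀ a ∈ L, ∀ b ∈ L, br a b ∈ L)
    (hLspan : Submodule.span K L = ⊤)
    (T S : A →ₗ[K] Module.End K M)
    (hTT : ∀ (a b : A) (m : M), T a (T b m) = T (br a b) m + T b (T a m))
    (hTS : ∀ (a b : A) (m : M), T a (S b m) = S b (T a m) + S (br a b) m)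
    (hST : ∀ (a b : A) (m : M), S (br a b) m = S b (S a m) + T a (S b m))
    (hnil : ∀ a ∈ L, IsNilpotent (T a)) :
    (∃ n : ℕ, ∀ f : Fin n → Module.End K M,
      (∀ i : Fin n, ∃ a : A, f i = T a ∨ f i = S a) → (List.ofFn f).prod = 0) ∧
    ∃ m : M, m ≠ 0 ∧ ∀ a : A, T a m = 0 ∧ S a m = 0 := by
  classical
  -- endomorphism-algebra versions of the hypotheses
  have hTTe : ∀ a b : A, T a * T b - T b * T a = T (br a b) := by
    intro a b; ext m
    simp only [LinearMap.sub_apply, Module.End.mul_apply]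
    rw [hTT a b m]; abel
  have hkey : ∀ a b : A, S b * T a = -(S b * S a) := by
    intro a b; ext m
    simp only [Module.End.mul_apply, LinearMap.neg_apply]
    have h1 := hTS a b m
    have h2 := hST a b m
    have h3 : S (br a b) m = S b (S a m) + (S b (T a m) + S (br a b) m) := by
      rw [← h1]; exact h2
    rw [← add_assoc] at h3
    have h4 : S b (S a m) + S b (T a m) = 0 := right_eq_add.mp h3
    exact (eq_neg_of_add_eq_zero_left (by rw [add_comm]; exact h4))
  have h2e : ∀ a b : A, T a * S b = S b * T a + S (br a b) := by
    intro a b; ext m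
    simp only [Module.End.mul_apply, LinearMap.add_apply]
    exact hTS a b m
  -- Jacobson's theorem applied to the image of the Lie set L
  set E' := Module.End K M
  set W : Set E' := T '' L with hW
  have hclW : ∀ x ∈ W, ∀ y ∈ W, x * y - y * x ∈ W := by
    rintro x ⟨a, ha, rfl⟩ y ⟨b, hb, rfl⟩
    exact ⟨br a b, hLclosed a ha b hb, (hTTe a b).symm⟩
  have hnilW : ∀ x ∈ W, IsNilpotent x := by
    rintro x ⟨a, ha, rfl⟩
    exact hnil a ha
  obtain ⟨N, hN0, hNbot⟩ := jacobson (K := K) (E := E')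
    (finrank K (Submodule.span K W)) W hclW hnilW le_rfl
  set TR : Submodule K E' := LinearMap.range T with hTR
  have hspanW : Submodule.span K W = TR := by
    rw [hW, Submodule.span_image, hLspan, Submodule.map_top]
  rw [hspanW] at hNbot
  set SR : Submodule K E' := LinearMap.range S with hSR
  set P : Submodule K E' := TR ⊔ SR with hP
  -- submodule-level relations
  have h1le : SR * TR ≤ SR * SR := by
    rw [Submodule.mul_le]
    rintro x ⟨b, rfl⟩ y ⟨a, rfl⟩
    rw [hkey a b]
    exact neg_mem (Submodule.mul_mem_mul (LinearMap.mem_range_self S b)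
      (LinearMap.mem_range_self S a))
  have h1le' : SR * SR ≤ SR * TR := by
    rw [Submodule.mul_le]
    rintro x ⟨b, rfl⟩ y ⟨a, rfl⟩
    have he : S b * S a = -(S b * T a) := by rw [hkey a b, neg_neg]
    rw [he]
    exact neg_mem (Submodule.mul_mem_mul (LinearMap.mem_range_self S b)
      (LinearMap.mem_range_self T a))
  have h2le : TR * SR ≤ SR * TR ⊔ SR := by
    rw [Submodule.mul_le]
    rintro x ⟨a, rfl⟩ y ⟨b, rfl⟩
    rw [h2e a b]
    exact add_mem (Submodule.mem_sup_left (Submodule.mul_mem_mul (LinearMap.mem_range_self S b)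
      (LinearMap.mem_range_self T a)))
      (Submodule.mem_sup_right (LinearMap.mem_range_self S (br a b)))
  have Pbot : spow P (N + N) = ⊥ := by
    rw [hP]
    exact part1 TR SR N hNbot h1le h1le' h2le
  constructor
  · -- part 1
    refine ⟨N + N, ?_⟩
    intro f hf
    have hmem : (List.ofFn f).prod ∈ spow P (N + N) := by
      have h1 := list_prod_mem_spow P (List.ofFn f) ?_
      · rwa [List.length_ofFn] at h1
      · intro x hx
        obtain ⟨i, rfl⟩ := (List.mem_ofFn).mp hx
        obtain ⟨a, h|h⟩ := hf i
        · rw [h]; exact Submodule.mem_sup_left (LinearMap.mem_range_self T a)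
        · rw [h]; exact Submodule.mem_sup_right (LinearMap.mem_range_self S a)
    rw [Pbot] at hmem
    simpa using hmem
  · -- part 2
    let Φ : Submodule K E' → Submodule K M :=
      fun pp => Submodule.span K {x | ∃ g ∈ pp, ∃ u : M, g u = x}
    have hΦtop : Φ (spow P 0) = ⊤ := by
      refine top_unique ?_
      intro x _
      refine Submodule.subset_span ⟨1, ?_, x, rfl⟩
      exact one_mem_one'
    have hΦbot : Φ (spow P (N+N)) = ⊥ := by
      rw [Pbot]
      refine le_bot_iff.mp (Submodule.span_le.mpr ?_)
      rintro x ⟨g, hg, u, rfl⟩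
      have hg0 : g = 0 := by simpa using hg
      rw [hg0]
      exact Submodule.zero_mem ⊥
    have hΦstep : ∀ g : E', g ∈ P → ∀ j, ∀ x ∈ Φ (spow P j), g x ∈ Φ (spow P (j+1)) := by
      intro g hg j x hx
      have h1 : Submodule.map g (Φ (spow P j)) ≤ Φ (spow P (j+1)) := by
        rw [Submodule.map_span]
        refine Submodule.span_le.mpr ?_
        rintro y ⟨y', ⟨g', hg', u, rfl⟩, rfl⟩
        refine Submodule.subset_span ⟨g * g', ?_, u, ?_⟩
        · exact Submodule.mul_mem_mul hg hg'
        · rfl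
      exact h1 (Submodule.mem_map_of_mem hx)
    have hex : ∃ j, Φ (spow P j) = ⊥ := ⟨N+N, hΦbot⟩
    have hj0 : Φ (spow P (Nat.find hex)) = ⊥ := Nat.find_spec hex
    have hj0pos : 0 < Nat.find hex := by
      rcases Nat.eq_zero_or_pos (Nat.find hex) with h | h
      · exfalso
        rw [h, hΦtop] at hj0
        obtain ⟨x, hx⟩ := exists_ne (0 : M)
        apply hx
        have hxmem : x ∈ (⊤ : Submodule K M) := trivial
        rw [hj0] at hxmem
        simpa using hxmem
      · exact h
    have hne' : Φ (spow P (Nat.find hex - 1)) ≠ ⊥ := Nat.find_min hex (by omega)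
    obtain ⟨x0, hx0mem, hx0ne⟩ := Submodule.exists_mem_ne_zero_of_ne_bot hne'
    refine ⟨x0, hx0ne, ?_⟩
    intro a
    constructor
    · have h1 := hΦstep (T a) (Submodule.mem_sup_left (LinearMap.mem_range_self T a))
        (Nat.find hex - 1) x0 hx0mem
      rw [show Nat.find hex - 1 + 1 = Nat.find hex by omega, hj0] at h1
      simpa using h1
    · have h1 := hΦstep (S a) (Submodule.mem_sup_right (LinearMap.mem_range_self S a))
        (Nat.find hex - 1) x0 hx0mem
      rw [show Nat.find hex - 1 + 1 = Nat.find hex by omega, hj0] at h1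
      simpa using h1
end

section
/- Let A be a finite-dimensional (left) Leibniz algebra over a field in which the left multiplication operator L_a is nilpotent for every a ∈ A. Then A is a nilpotent Leibniz algebra. -/
/-- Engel's theorem: a finite-dimensional (left) Leibniz algebra in
which every left multiplication operator is nilpotent is a nilpotent algebra. -/
theorem leibniz_engel
    {K A : Type*} [Field K]
    [AddCommGroup A] [Module K A] [FiniteDimensional K A]
    (br : A →ₗ[K] A →ₗ[K] A)
    (leibniz : ∀ a b c : A, br a (br b c) = br (br a b) c + br b (br a c))
    (hnil : ∀ a : A, IsNilpotent (br a)) :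
    ∃ m : ℕ, lcs br m = ⊥ := by
  -- the Lie subalgebra of End K A generated (in fact equal to) the range of left mult.
  letI : LieRing (Module.End K A) := LieRing.ofAssociativeRing
  set g : LieSubalgebra K (Module.End K A) :=
    { LinearMap.range br with
      lie_mem' := by
        rintro x y ⟨a, rfl⟩ ⟨b, rfl⟩
        refine ⟨br a b, ?_⟩
        ext c
        simp only [LieRing.of_associative_ring_bracket, LinearMap.sub_apply,
          Module.End.mul_apply]
        rw [eq_sub_iff_add_eq, ← leibniz] } with hg
  haveI : FiniteDimensional K g := FiniteDimensional.finiteDimensional_submodule g.toSubmodule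
  have hgnil : ∀ x : g, IsNilpotent (LieModule.toEnd K g A x) := by
    rintro ⟨x, a, rfl⟩
    have h1 : LieModule.toEnd K g A ⟨br a, a, rfl⟩ = br a := by ext m; rfl
    rw [h1]; exact hnil a
  have hN := LieAlgebra.isEngelian_of_isNoetherian (R := K) (L := g) A hgnil
  obtain ⟨k, hk⟩ := @LieModule.IsNilpotent.nilpotent K g A _ _ _ _ _ _ _ hN
  have key : ∀ n, lcs br n ≤ (LieModule.lowerCentralSeries K g A n : Submodule K A) := by
    intro n
    induction n with
    | zero => simp [lcs]
    | succ n ih =>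
      show bracketSpan br ⊤ (lcs br n) ≤ _
      rw [LieModule.lowerCentralSeries_succ]
      apply Submodule.span_le.mpr
      rintro x ⟨a, -, b, hb, rfl⟩
      have hxa : br a b = ⁅(⟨br a, a, rfl⟩ : g), b⁆ := rfl
      rw [SetLike.mem_coe, LieSubmodule.mem_toSubmodule, hxa]
      exact LieSubmodule.lie_mem_lie (LieSubmodule.mem_top _) (ih hb)
  refine ⟨k, le_bot_iff.mp ?_⟩
  have := key k
  rw [hk] at this
  simpa using this
end

section
/- Let A be a finite-dimensional (left) Leibniz algebra over a field. Then the following are equivalent: (1) A is nilpotent; (2) A satisfies the normalizer condition (every proper subalgebra of A is properly contained in its normalizer); (3) A satisfies the right normalizer condition (every proper subalgebra of A is properly contained in its right normalizer); (4) every maximal subalgebra of A is an ideal of A; (5) every maximal subalgebra of A is a right ideal of A. -/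
section Aux

variable {K A : Type*} [Field K] [AddCommGroup A] [Module K A]
  (br : A →ₗ[K] A →ₗ[K] A)

lemma bracketSpan_le {p q r : Submodule K A} :
    bracketSpan br p q ≤ r ↔ ∀ a ∈ p, ∀ b ∈ q, br a b ∈ r := by
  constructor
  · intro h a ha b hb
    exact h (Submodule.subset_span ⟨a, ha, b, hb, rfl⟩)
  · intro h
    refine Submodule.span_le.2 ?_
    rintro x ⟨a, ha, b, hb, rfl⟩
    exact h a ha b hb

lemma mem_bracketSpan {p q : Submodule K A} {a b : A} (ha : a ∈ p) (hb : b ∈ q) :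
    br a b ∈ bracketSpan br p q :=
  Submodule.subset_span ⟨a, ha, b, hb, rfl⟩

lemma bracketSpan_mono {p p' q q' : Submodule K A} (h1 : p ≤ p') (h2 : q ≤ q') :
    bracketSpan br p q ≤ bracketSpan br p' q' :=
  (bracketSpan_le br).2 fun a ha b hb => mem_bracketSpan br (h1 ha) (h2 hb)

lemma lcs_succ (n : ℕ) : lcs br (n + 1) = bracketSpan br ⊤ (lcs br n) := rfl

variable (leibniz : ∀ a b c : A, br a (br b c) = br (br a b) c + br b (br a c))
include leibniz

lemma lcs_bracket_le (i : ℕ) : ∀ j : ℕ,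
    bracketSpan br (lcs br i) (lcs br j) ≤ lcs br (i + j + 1) := by
  induction i with
  | zero =>
    intro j
    show bracketSpan br ⊤ (lcs br j) ≤ lcs br (0 + j + 1)
    rw [Nat.zero_add]
    exact le_of_eq (lcs_succ br j).symm
  | succ i ih =>
    intro j
    have key : ∀ b ∈ lcs br j, ∀ m ∈ lcs br (i + 1), br m b ∈ lcs br (i + 1 + j + 1) := by
      intro b hb
      have : lcs br (i+1) ≤ Submodule.comap (br.flip b) (lcs br (i + 1 + j + 1)) := by
        rw [lcs_succ]
        refine (bracketSpan_le br).2 fun a _ u hu => ?_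
        simp only [Submodule.mem_comap, LinearMap.flip_apply]
        have h1 : br u b ∈ lcs br (i + j + 1) := ih j (mem_bracketSpan br hu hb)
        have t1 : br a (br u b) ∈ lcs br (i + j + 1 + 1) := by
          rw [lcs_succ]
          exact mem_bracketSpan br Submodule.mem_top h1
        have hab : br a b ∈ lcs br (j + 1) := by
          rw [lcs_succ]
          exact mem_bracketSpan br Submodule.mem_top hb
        have t2 : br u (br a b) ∈ lcs br (i + (j + 1) + 1) :=
          ih (j + 1) (mem_bracketSpan br hu hab)
        have e : br (br a u) b = br a (br u b) - br u (br a b) := by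
          rw [leibniz a u b]; abel
        have harith1 : i + 1 + j + 1 = i + j + 1 + 1 := by omega
        have harith2 : i + (j + 1) + 1 = i + j + 1 + 1 := by omega
        rw [harith2] at t2
        rw [harith1, e]
        exact sub_mem t1 t2
      intro m hm
      simpa using this hm
    exact (bracketSpan_le br).2 fun m hm b hb => key b hb m hm

lemma lcs_bracket_top_le (k : ℕ) : bracketSpan br (lcs br k) ⊤ ≤ lcs br (k + 1) := by
  have := lcs_bracket_le br leibniz k 0
  rwa [Nat.add_zero] at this

omit leibniz in
/-- Existence of a "crossing index" for a proper subalgebra when the algebra is nilpotent. -/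
lemma exists_crossing {H : Submodule K A} (hH : H ≠ ⊤) {m : ℕ} (hm : lcs br m = ⊥) :
    ∃ k, ¬ lcs br k ≤ H ∧ lcs br (k + 1) ≤ H := by
  classical
  have hPm : lcs br m ≤ H := by rw [hm]; exact bot_le
  have hP0 : ¬ lcs br 0 ≤ H := by
    show ¬ (⊤ : Submodule K A) ≤ H
    intro h
    exact hH (top_le_iff.mp h)
  have hex : ∃ n, lcs br n ≤ H := ⟨m, hPm⟩
  let j := Nat.find hex
  have hj : lcs br j ≤ H := Nat.find_spec hex
  have hjpos : j ≠ 0 := fun h => hP0 (h ▸ hj)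
  obtain ⟨k, hk⟩ : ∃ k, j = k + 1 := ⟨j - 1, by omega⟩
  refine ⟨k, Nat.find_min hex (by omega), by rw [← hk]; exact hj⟩

end Aux

section Engel

open LieAlgebra LieModule

variable {K A : Type*} [Field K] [AddCommGroup A] [Module K A] [FiniteDimensional K A]
  (br : A →ₗ[K] A →ₗ[K] A)
  (leibniz : ∀ a b c : A, br a (br b c) = br (br a b) c + br b (br a c))

include leibniz in
/-- If every left multiplication operator is nilpotent then the algebra is nilpotent
(Engel's theorem for Leibniz algebras). -/
lemma lcs_eq_bot_of_forall_isNilpotent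
    (hnil : ∀ a : A, IsNilpotent (br a : Module.End K A)) :
    ∃ m : ℕ, lcs br m = ⊥ := by
  classical
  letI : LieRing (Module.End K A) := LieRing.ofAssociativeRing
  -- the Lie algebra of left multiplications
  let E : LieSubalgebra K (Module.End K A) :=
    { carrier := Set.range br
      add_mem' := by rintro _ _ ⟨a, rfl⟩ ⟨b, rfl⟩; exact ⟨a + b, by simp⟩
      zero_mem' := ⟨0, by simp⟩
      smul_mem' := by rintro c _ ⟨a, rfl⟩; exact ⟨c • a, by simp⟩
      lie_mem' := by
        rintro _ _ ⟨a, rfl⟩ ⟨b, rfl⟩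
        refine ⟨br a b, ?_⟩
        ext c
        have := leibniz a b c
        simp only [Ring.lie_def, LinearMap.sub_apply, Module.End.mul_apply]
        rw [this]; abel }
  have hmemE : ∀ a : A, (br a : Module.End K A) ∈ E := fun a => ⟨a, rfl⟩
  haveI : IsNoetherian K E := by
    have : IsNoetherian K (LieSubalgebra.toSubmodule E) := inferInstance
    exact this
  have heng := LieAlgebra.isEngelian_of_isNoetherian (R := K) (L := E) A ?nilp
  case nilp =>
    rintro ⟨-, a, rfl⟩
    have h : toEnd K E A ⟨br a, hmemE a⟩ = (br a : Module.End K A) := by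
      ext m; rfl
    rw [h]
    exact hnil a
  obtain ⟨k, hk⟩ := (LieModule.isNilpotent_iff K E A).mp heng
  refine ⟨k, ?_⟩
  rw [eq_bot_iff]
  have hle : ∀ n : ℕ, lcs br n ≤ LieSubmodule.toSubmodule (LieModule.lowerCentralSeries K E A n) := by
    intro n
    induction n with
    | zero => simp [lcs]
    | succ n ih =>
      rw [lcs_succ]
      refine (bracketSpan_le br).2 fun a _ b hb => ?_
      have hb' : b ∈ LieModule.lowerCentralSeries K E A n := ih hb
      have : br a b ∈ ⁅(⊤ : LieIdeal K E), LieModule.lowerCentralSeries K E A n⁆ := by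
        have : br a b = ⁅(⟨br a, hmemE a⟩ : E), b⁆ := rfl
        rw [this]
        exact LieSubmodule.lie_mem_lie trivial hb'
      rw [LieModule.lowerCentralSeries_succ]
      simpa using this
  calc lcs br k ≤ LieSubmodule.toSubmodule (LieModule.lowerCentralSeries K E A k) := hle k
    _ = ⊥ := by rw [hk]; simp

end Engel

section Fitting

open LinearMap Filter

variable {K A : Type*} [Field K] [AddCommGroup A] [Module K A] [FiniteDimensional K A]
  (br : A →ₗ[K] A →ₗ[K] A)
  (leibniz : ∀ a b c : A, br a (br b c) = br (br a b) c + br b (br a c))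

include leibniz in
/-- Iterated derivation property: if `(br a)^p b = 0` and `(br a)^q c = 0` with
`p + q = n + 1` then `(br a)^n (br b c) = 0`. -/
lemma derivation_pow_vanish (a : A) :
    ∀ n p q : ℕ, p + q = n + 1 → ∀ b c : A,
      ((br a : Module.End K A) ^ p) b = 0 → ((br a : Module.End K A) ^ q) c = 0 →
      ((br a : Module.End K A) ^ n) (br b c) = 0 := by
  intro n
  induction n with
  | zero =>
    intro p q hpq b c hb hc
    rcases Nat.eq_zero_or_pos p with hp | hp
    · subst hp
      simp only [pow_zero, Module.End.one_apply] at hb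
      simp [hb]
    · have : q = 0 := by omega
      subst this
      simp only [pow_zero, Module.End.one_apply] at hc
      simp [hc]
  | succ n ih =>
    intro p q hpq b c hb hc
    rcases Nat.eq_zero_or_pos p with hp | hp
    · subst hp
      simp only [pow_zero, Module.End.one_apply] at hb
      simp [hb]
    rcases Nat.eq_zero_or_pos q with hq | hq
    · subst hq
      simp only [pow_zero, Module.End.one_apply] at hc
      simp [hc]
    obtain ⟨p', rfl⟩ : ∃ p', p = p' + 1 := ⟨p - 1, by omega⟩
    obtain ⟨q', rfl⟩ : ∃ q', q = q' + 1 := ⟨q - 1, by omega⟩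
    have step : ((br a : Module.End K A) ^ (n+1)) (br b c)
        = ((br a : Module.End K A) ^ n) (br a (br b c)) := by
      rw [pow_succ]
      simp [Module.End.mul_apply]
    rw [step, leibniz a b c, map_add]
    have h1 : ((br a : Module.End K A) ^ n) (br (br a b) c) = 0 := by
      refine ih p' (q' + 1) (by omega) _ _ ?_ hc
      have : ((br a : Module.End K A) ^ p') (br a b)
          = ((br a : Module.End K A) ^ (p' + 1)) b := by
        rw [pow_succ]
        simp [Module.End.mul_apply]
      rw [this]; exact hb
    have h2 : ((br a : Module.End K A) ^ n) (br b (br a c)) = 0 := by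
      refine ih (p' + 1) q' (by omega) _ _ hb ?_
      have : ((br a : Module.End K A) ^ q') (br a c)
          = ((br a : Module.End K A) ^ (q' + 1)) c := by
        rw [pow_succ]
        simp [Module.End.mul_apply]
      rw [this]; exact hc
    rw [h1, h2, add_zero]

include leibniz in
/-- The Fitting null component of a left multiplication is a subalgebra. -/
lemma ker_pow_finrank_subalg (a : A) :
    ∀ x ∈ LinearMap.ker ((br a : Module.End K A) ^ (Module.finrank K A)),
    ∀ y ∈ LinearMap.ker ((br a : Module.End K A) ^ (Module.finrank K A)),
      br x y ∈ LinearMap.ker ((br a : Module.End K A) ^ (Module.finrank K A)) := by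
  intro x hx y hy
  set N := Module.finrank K A with hN
  have hy' : ((br a : Module.End K A) ^ (N + 1)) y = 0 := by
    rw [pow_succ']
    simp only [Module.End.mul_apply]
    rw [LinearMap.mem_ker.mp hy, map_zero]
  have key : ((br a : Module.End K A) ^ (N + N)) (br x y) = 0 :=
    derivation_pow_vanish br leibniz a (N + N) N (N + 1) (by omega) x y
      (LinearMap.mem_ker.mp hx) hy'
  have : br x y ∈ LinearMap.ker ((br a : Module.End K A) ^ (N + N)) := key
  exact Module.End.ker_pow_le_ker_pow_finrank _ _ this

include leibniz in
/-- Fact 2: the Fitting-one component of `a` with respect to `br a` is in the left centre. -/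
lemma fact2 (a : A) {m : ℕ} (hm1 : 1 ≤ m)
    (hdisF : Disjoint
      (LinearMap.ker (((LinearMap.mulLeft K (br a : Module.End K A))
          - (LinearMap.mulRight K (br a : Module.End K A))) ^ m))
      (LinearMap.range (((LinearMap.mulLeft K (br a : Module.End K A))
          - (LinearMap.mulRight K (br a : Module.End K A))) ^ m)))
    {a₀ a₁ : A} (ha : a = a₀ + a₁)
    (h0 : a₀ ∈ LinearMap.ker ((br a : Module.End K A) ^ m))
    (h1 : a₁ ∈ LinearMap.range ((br a : Module.End K A) ^ m)) :
    br a₁ = 0 := by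
  set f : Module.End K A := br a with hf
  set F : Module.End K (Module.End K A) :=
    (LinearMap.mulLeft K f) - (LinearMap.mulRight K f) with hF
  have intertwine : ∀ z : A, F (br z) = br (f z) := by
    intro z
    ext c
    simp only [hF, LinearMap.sub_apply, LinearMap.mulLeft_apply, LinearMap.mulRight_apply,
      Module.End.mul_apply]
    have := leibniz a z c
    simp only [LinearMap.sub_apply, Module.End.mul_apply, hf]
    rw [this]; abel
  have intertwine_pow : ∀ k : ℕ, ∀ z : A, (F ^ k) (br z) = br ((f ^ k) z) := by
    intro k
    induction k with
    | zero => intro z; simp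
    | succ k ih =>
      intro z
      rw [pow_succ, pow_succ]
      simp only [Module.End.mul_apply]
      rw [intertwine z]; exact ih (f z)
  -- br a₀ ∈ ker F^m
  have hker0 : (F ^ m) (br a₀) = 0 := by
    rw [intertwine_pow m a₀, LinearMap.mem_ker.mp h0, map_zero]
  -- f = br a ∈ ker F ≤ ker F^m
  have hkerf : (F ^ m) (br a) = 0 := by
    obtain ⟨j, rfl⟩ : ∃ j, m = j + 1 := ⟨m - 1, by omega⟩
    have hFf : F (br a) = 0 := by
      simp only [hF, LinearMap.sub_apply, LinearMap.mulLeft_apply, LinearMap.mulRight_apply, hf]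
      rw [sub_self]
    rw [pow_succ]
    simp only [Module.End.mul_apply, hFf, map_zero]
  -- br a₁ ∈ ker F^m
  have hker1 : br a₁ ∈ LinearMap.ker (F ^ m) := by
    have : a₁ = a - a₀ := by rw [ha]; abel
    rw [this, map_sub]
    simp only [LinearMap.mem_ker, map_sub]
    rw [hkerf, hker0, sub_zero]
  -- br a₁ ∈ range F^m
  have hrange1 : br a₁ ∈ LinearMap.range (F ^ m) := by
    obtain ⟨w, hw⟩ := h1
    exact ⟨br w, by rw [intertwine_pow m w, hw]⟩
  have : br a₁ ∈ (⊥ : Submodule K (Module.End K A)) := by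
    rw [← (disjoint_iff.mp hdisF)]
    exact ⟨hker1, hrange1⟩
  simpa using this

include leibniz in
/-- Key lemma: a subalgebra containing the Fitting null component of a left multiplication
is its own right normalizer. -/
lemma key_lemma (a : A) (U : Submodule K A)
    (hU : ∀ x ∈ U, ∀ y ∈ U, br x y ∈ U)
    (hA0 : LinearMap.ker ((br a : Module.End K A) ^ (Module.finrank K A)) ≤ U)
    (x : A) (hx : ∀ u ∈ U, br u x ∈ U) : x ∈ U := by
  classical
  set N := Module.finrank K A with hN
  set f : Module.End K A := br a with hf
  set F : Module.End K (Module.End K A) :=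
    (LinearMap.mulLeft K f) - (LinearMap.mulRight K f) with hF
  -- choose a single large exponent m
  obtain ⟨m, hm⟩ := Filter.eventually_atTop.mp
    ((f.eventually_disjoint_ker_pow_range_pow.and
      f.eventually_codisjoint_ker_pow_range_pow).and
      (F.eventually_disjoint_ker_pow_range_pow.and
        (Filter.eventually_ge_atTop (N + 1))))
  obtain ⟨⟨hdis, hcodis⟩, hdisF, hmN⟩ := hm m le_rfl
  have hm1 : 1 ≤ m := by omega
  have hkerm : LinearMap.ker (f ^ m) = LinearMap.ker (f ^ N) :=
    Module.End.ker_pow_eq_ker_pow_finrank_of_le (by omega)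
  have hA0' : LinearMap.ker (f ^ m) ≤ U := by rw [hkerm]; exact hA0
  -- decompose a
  have hsup : LinearMap.ker (f ^ m) ⊔ LinearMap.range (f ^ m) = ⊤ :=
    codisjoint_iff.mp hcodis
  obtain ⟨a₀, h0, a₁, h1, ha⟩ :=
    Submodule.mem_sup.mp (hsup ▸ Submodule.mem_top (x := a))
  have ha' : a = a₀ + a₁ := ha.symm
  have ha₁0 : br a₁ = 0 := fact2 br leibniz a hm1 hdisF ha' h0 h1
  have hfa₀ : br a₀ = f := by
    have : a₀ = a - a₁ := by rw [ha']; abel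
    rw [this, map_sub, ha₁0, sub_zero, hf]
  have ha₀U : a₀ ∈ U := hA0' h0
  -- the right normalizer of U
  set Nr : Submodule K A := ⨅ u : U, Submodule.comap (br u) U with hNr
  have mem_Nr : ∀ z : A, z ∈ Nr ↔ ∀ u ∈ U, br u z ∈ U := by
    intro z
    simp only [hNr, Submodule.mem_iInf, Submodule.mem_comap]
    exact ⟨fun h u hu => h ⟨u, hu⟩, fun h u => h u u.2⟩
  have hUNr : U ≤ Nr := fun u' hu' => (mem_Nr u').2 fun u hu => hU u hu u' hu'
  have hxNr : x ∈ Nr := (mem_Nr x).2 hx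
  -- the invariant subspace W
  set W : Submodule K A := Nr ⊓ LinearMap.range (f ^ m) with hW
  have hWf : ∀ w ∈ W, f w ∈ W := by
    intro w hw
    obtain ⟨hwNr, hwR⟩ := Submodule.mem_inf.mp hw
    refine Submodule.mem_inf.mpr ⟨?_, ?_⟩
    · rw [mem_Nr]
      intro u hu
      have hfw : f w = br a₀ w := by rw [hfa₀]
      rw [hfw]
      have e := leibniz u a₀ w
      have t1 : br (br u a₀) w ∈ U := (mem_Nr w).mp hwNr _ (hU u hu a₀ ha₀U)
      have t2 : br a₀ (br u w) ∈ U := hU a₀ ha₀U _ ((mem_Nr w).mp hwNr u hu)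
      rw [e]
      exact add_mem t1 t2
    · obtain ⟨y, hy⟩ := hwR
      refine ⟨f y, ?_⟩
      have : (f ^ m) (f y) = f ((f ^ m) y) := by
        rw [← Module.End.mul_apply, ← Module.End.mul_apply, ← pow_succ, ← pow_succ']
      rw [this, hy]
  -- f maps W onto W
  have hWinj : Disjoint (LinearMap.ker f) W := by
    have : LinearMap.ker f ≤ LinearMap.ker (f ^ m) := by
      intro z hz
      obtain ⟨j, rfl⟩ : ∃ j, m = j + 1 := ⟨m - 1, by omega⟩
      rw [LinearMap.mem_ker, pow_succ]
      simp only [Module.End.mul_apply]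
      rw [LinearMap.mem_ker.mp hz, map_zero]
    exact Disjoint.mono this inf_le_right hdis
  have hmapW : Submodule.map f W = W := by
    have hle : Submodule.map f W ≤ W := by
      rintro - ⟨w, hw, rfl⟩
      exact hWf w hw
    have hker : LinearMap.ker (f ∘ₗ W.subtype) = ⊥ := by
      rw [eq_bot_iff]
      rintro ⟨z, hz⟩ hz'
      have h1 : z ∈ LinearMap.ker f := hz'
      have h2 : z ∈ LinearMap.ker f ⊓ W := Submodule.mem_inf.mpr ⟨h1, hz⟩
      rw [hWinj.eq_bot] at h2
      rw [Submodule.mem_bot] at h2 ⊢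
      exact Subtype.ext h2
    have hrank : Module.finrank K (Submodule.map f W) = Module.finrank K W := by
      have h1 : LinearMap.range (f ∘ₗ W.subtype) = Submodule.map f W := by
        rw [LinearMap.range_comp, Submodule.range_subtype]
      rw [← h1]
      exact LinearMap.finrank_range_of_inj (LinearMap.ker_eq_bot.mp hker)
    exact Submodule.eq_of_le_of_finrank_le hle (le_of_eq hrank.symm)
  -- decompose x and finish
  obtain ⟨x₀, hx0, x₁, hx1, hxsum⟩ :=
    Submodule.mem_sup.mp (hsup ▸ Submodule.mem_top (x := x))
  have hx₀U : x₀ ∈ U := hA0' hx0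
  have hx₁Nr : x₁ ∈ Nr := by
    have : x₁ = x - x₀ := by rw [← hxsum]; abel
    rw [this]
    exact sub_mem hxNr (hUNr hx₀U)
  have hx₁W : x₁ ∈ W := Submodule.mem_inf.mpr ⟨hx₁Nr, hx1⟩
  have : x₁ ∈ Submodule.map f W := hmapW.symm ▸ hx₁W
  obtain ⟨w, hwW, hwx⟩ := this
  have hx₁U : x₁ ∈ U := by
    have hfw : f w = br a₀ w := by rw [hfa₀]
    rw [← hwx, hfw]
    exact (mem_Nr w).mp (Submodule.mem_inf.mp hwW).1 a₀ ha₀U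
  rw [← hxsum]
  exact add_mem hx₀U hx₁U

end Fitting

section Max

variable {K A : Type*} [Field K] [AddCommGroup A] [Module K A] [FiniteDimensional K A]
  (br : A →ₗ[K] A →ₗ[K] A)

lemma exists_maximal_subalgebra (U : Submodule K A)
    (hU : ∀ x ∈ U, ∀ y ∈ U, br x y ∈ U) (hUne : U ≠ ⊤) :
    ∃ M : Submodule K A, (∀ x ∈ M, ∀ y ∈ M, br x y ∈ M) ∧ U ≤ M ∧ M ≠ ⊤ ∧
      ∀ H' : Submodule K A, (∀ x ∈ H', ∀ y ∈ H', br x y ∈ H') → M ≤ H' →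
        H' = M ∨ H' = ⊤ := by
  classical
  suffices h : ∀ d : ℕ, ∀ U : Submodule K A, (∀ x ∈ U, ∀ y ∈ U, br x y ∈ U) → U ≠ ⊤ →
      Module.finrank K A - Module.finrank K U ≤ d →
      ∃ M : Submodule K A, (∀ x ∈ M, ∀ y ∈ M, br x y ∈ M) ∧ U ≤ M ∧ M ≠ ⊤ ∧
        ∀ H' : Submodule K A, (∀ x ∈ H', ∀ y ∈ H', br x y ∈ H') → M ≤ H' →
          H' = M ∨ H' = ⊤ by
    exact h _ U hU hUne le_rfl
  intro d
  induction d with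
  | zero =>
    intro U hU hUne hle
    exfalso
    apply hUne
    apply Submodule.eq_top_of_finrank_eq
    have h1 : Module.finrank K U ≤ Module.finrank K A := Submodule.finrank_le U
    omega
  | succ d ih =>
    intro U hU hUne hle
    by_cases hmax : ∀ H' : Submodule K A, (∀ x ∈ H', ∀ y ∈ H', br x y ∈ H') → U ≤ H' →
        H' = U ∨ H' = ⊤
    · exact ⟨U, hU, le_rfl, hUne, hmax⟩
    · push_neg at hmax
      obtain ⟨H', hH'sub, hUH', hne1, hne2⟩ := hmax
      have hlt : U < H' := lt_of_le_of_ne hUH' (Ne.symm hne1)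
      have h1 : Module.finrank K U < Module.finrank K H' :=
        Submodule.finrank_lt_finrank_of_lt hlt
      have h2 : Module.finrank K H' ≤ Module.finrank K A := Submodule.finrank_le H'
      obtain ⟨M, m1, m2, m3, m4⟩ := ih H' hH'sub hne2 (by omega)
      exact ⟨M, m1, hUH'.trans m2, m3, m4⟩

end Max

/-- for a finite-dimensional (left) Leibniz algebra `A` the following
are equivalent: (1) `A` is nilpotent; (2) every proper subalgebra is properly
contained in its normalizer; (3) every proper subalgebra is properly contained in
its right normalizer; (4) every maximal subalgebra is an ideal; (5) every maximal
subalgebra is a right ideal. -/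
theorem leibniz_nilpotency_characterizations
    {K A : Type*} [Field K]
    [AddCommGroup A] [Module K A] [FiniteDimensional K A]
    (br : A →ₗ[K] A →ₗ[K] A)
    (leibniz : ∀ a b c : A, br a (br b c) = br (br a b) c + br b (br a c)) :
    List.TFAE
      [ (∃ m : ℕ, lcs br m = ⊥),
        (∀ H : Submodule K A, (∀ x ∈ H, ∀ y ∈ H, br x y ∈ H) → H ≠ ⊤ →
          ∃ x : A, x ∉ H ∧ ∀ h ∈ H, br x h ∈ H ∧ br h x ∈ H),
        (∀ H : Submodule K A, (∀ x ∈ H, ∀ y ∈ H, br x y ∈ H) → H ≠ ⊤ →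
          ∃ x : A, x ∉ H ∧ ∀ h ∈ H, br h x ∈ H),
        (∀ H : Submodule K A, (∀ x ∈ H, ∀ y ∈ H, br x y ∈ H) → H ≠ ⊤ →
          (∀ H' : Submodule K A, (∀ x ∈ H', ∀ y ∈ H', br x y ∈ H') →
            H ≤ H' → H' = H ∨ H' = ⊤) →
          ∀ a : A, ∀ x ∈ H, br a x ∈ H ∧ br x a ∈ H),
        (∀ H : Submodule K A, (∀ x ∈ H, ∀ y ∈ H, br x y ∈ H) → H ≠ ⊤ →
          (∀ H' : Submodule K A, (∀ x ∈ H', ∀ y ∈ H', br x y ∈ H') →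
            H ≤ H' → H' = H ∨ H' = ⊤) →
          ∀ x ∈ H, ∀ a : A, br x a ∈ H) ] := by
  tfae_have 1 → 2 := by
    intro h1 H hHsub hHne
    obtain ⟨m, hm⟩ := h1
    obtain ⟨k, hk, hk1⟩ := exists_crossing br hHne hm
    obtain ⟨x, hx, hxH⟩ := SetLike.not_le_iff_exists.mp hk
    refine ⟨x, hxH, fun h hh => ⟨?_, ?_⟩⟩
    · exact hk1 (lcs_bracket_top_le br leibniz k
        (mem_bracketSpan br hx Submodule.mem_top))
    · refine hk1 ?_
      rw [lcs_succ]
      exact mem_bracketSpan br Submodule.mem_top hx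
  tfae_have 2 → 3 := by
    intro h2 H hs hne
    obtain ⟨x, hx1, hx2⟩ := h2 H hs hne
    exact ⟨x, hx1, fun h hh => (hx2 h hh).2⟩
  tfae_have 3 → 1 := by
    intro h3
    apply lcs_eq_bot_of_forall_isNilpotent br leibniz
    intro a
    by_contra hnil
    set U := LinearMap.ker ((br a : Module.End K A) ^ (Module.finrank K A)) with hUdef
    have hUsub := ker_pow_finrank_subalg br leibniz a
    have hUne : U ≠ ⊤ := by
      intro h
      exact hnil ⟨Module.finrank K A, LinearMap.ker_eq_top.mp h⟩
    obtain ⟨x, hx1, hx2⟩ := h3 U hUsub hUne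
    exact hx1 (key_lemma br leibniz a U hUsub le_rfl x hx2)
  tfae_have 1 → 4 := by
    intro h1 H hs hne hmax a x hxH
    obtain ⟨m, hm⟩ := h1
    obtain ⟨k, hk, hk1⟩ := exists_crossing br hne hm
    have hsub' : ∀ u ∈ H ⊔ lcs br k, ∀ v ∈ H ⊔ lcs br k, br u v ∈ H ⊔ lcs br k := by
      intro u hu v hv
      obtain ⟨h₁, hh₁, u₁, hu₁, rfl⟩ := Submodule.mem_sup.mp hu
      obtain ⟨h₂, hh₂, u₂, hu₂, rfl⟩ := Submodule.mem_sup.mp hv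
      have t1 : br h₁ h₂ ∈ H := hs h₁ hh₁ h₂ hh₂
      have t2 : br h₁ u₂ ∈ H := by
        refine hk1 ?_
        rw [lcs_succ]
        exact mem_bracketSpan br Submodule.mem_top hu₂
      have t3 : br u₁ h₂ ∈ H := hk1 (lcs_bracket_top_le br leibniz k
        (mem_bracketSpan br hu₁ Submodule.mem_top))
      have t4 : br u₁ u₂ ∈ H := hk1 (lcs_bracket_top_le br leibniz k
        (mem_bracketSpan br hu₁ Submodule.mem_top))
      have expand : br (h₁ + u₁) (h₂ + u₂)
          = br h₁ h₂ + br h₁ u₂ + (br u₁ h₂ + br u₁ u₂) := by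
        simp only [map_add, LinearMap.add_apply]
        abel
      rw [expand]
      exact Submodule.mem_sup_left (add_mem (add_mem t1 t2) (add_mem t3 t4))
    have htop : H ⊔ lcs br k = ⊤ := by
      rcases hmax (H ⊔ lcs br k) hsub' le_sup_left with h | h
      · exact absurd (le_sup_right.trans h.le) hk
      · exact h
    obtain ⟨h₁, hh₁, u₁, hu₁, ha⟩ :=
      Submodule.mem_sup.mp (htop ▸ Submodule.mem_top (x := a))
    constructor
    · rw [← ha, map_add, LinearMap.add_apply]
      refine add_mem (hs h₁ hh₁ x hxH) ?_
      exact hk1 (lcs_bracket_top_le br leibniz k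
        (mem_bracketSpan br hu₁ Submodule.mem_top))
    · rw [← ha, map_add]
      refine add_mem (hs x hxH h₁ hh₁) ?_
      refine hk1 ?_
      rw [lcs_succ]
      exact mem_bracketSpan br Submodule.mem_top hu₁
  tfae_have 4 → 5 := by
    intro h4 H hs hne hmax x hxH a
    exact (h4 H hs hne hmax a x hxH).2
  tfae_have 5 → 1 := by
    intro h5
    apply lcs_eq_bot_of_forall_isNilpotent br leibniz
    intro a
    by_contra hnil
    set U := LinearMap.ker ((br a : Module.End K A) ^ (Module.finrank K A)) with hUdef
    have hUsub := ker_pow_finrank_subalg br leibniz a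
    have hUne : U ≠ ⊤ := by
      intro h
      exact hnil ⟨Module.finrank K A, LinearMap.ker_eq_top.mp h⟩
    obtain ⟨M, hMsub, hUM, hMne, hMmax⟩ := exists_maximal_subalgebra br U hUsub hUne
    have hM := h5 M hMsub hMne hMmax
    refine hMne (eq_top_iff.mpr fun z _ => ?_)
    exact key_lemma br leibniz a M hMsub hUM z (fun u hu => hM u hu z)
  tfae_finish
end

section
/- Let A be a finite-dimensional semisimple (left) Leibniz algebra over an algebraically closed field of characteristic zero. Then the Killing form κ(a,b) = tr(L_a ∘ L_b) on A is nondegenerate, i.e. its radical A^⊥ = {b ∈ A : tr(L_b ∘ L_a) = 0 for all a ∈ A} equals Leib(A). -/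
namespace SemisimpleLeibnizAux
open Module Polynomial LinearMap

variable {K V W : Type*} [Field K] [AddCommGroup V] [Module K V] [AddCommGroup W] [Module K W]
attribute [local instance 100] LieRing.ofAssociativeRing

lemma pow_apply_eigen {f : Module.End K V} {μ : K} {v : V} (hv : f v = μ • v) (n : ℕ) :
    (f ^ n) v = μ ^ n • v := by
  induction n with
  | zero => simp
  | succ n ih => rw [pow_succ, pow_succ, Module.End.mul_apply, hv, map_smul, ih, smul_smul, mul_comm]

lemma aeval_apply_eigen {f : Module.End K V} {μ : K} {v : V} (hv : f v = μ • v) (p : K[X]) :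
    aeval f p v = p.eval μ • v := by
  rw [aeval_eq_sum_range, eval_eq_sum_range' (lt_add_one p.natDegree)]
  simp only [LinearMap.coe_sum, Finset.sum_apply, LinearMap.smul_apply, Finset.sum_smul]
  exact Finset.sum_congr rfl fun i _ => by rw [pow_apply_eigen hv, smul_smul]

lemma intertwine_aeval {a : Module.End K V} {a' : Module.End K W} {g : V →ₗ[K] W}
    (h : g ∘ₗ a = a' ∘ₗ g) (p : K[X]) : g ∘ₗ (aeval a p) = (aeval a' p) ∘ₗ g := by
  have hpow : ∀ n : ℕ, g ∘ₗ (a ^ n) = (a' ^ n) ∘ₗ g := by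
    intro n
    induction n with
    | zero => ext v; simp
    | succ n ih =>
      rw [pow_succ, pow_succ]
      calc g ∘ₗ (a ^ n * a) = (g ∘ₗ (a ^ n)) ∘ₗ a := by rfl
        _ = ((a' ^ n) ∘ₗ g) ∘ₗ a := by rw [ih]
        _ = (a' ^ n) ∘ₗ (g ∘ₗ a) := by rfl
        _ = (a' ^ n) ∘ₗ (a' ∘ₗ g) := by rw [h]
        _ = (a' ^ n * a') ∘ₗ g := by rfl
  rw [aeval_eq_sum_range, aeval_eq_sum_range (p := p) a']
  ext v
  simp only [LinearMap.coe_comp, Function.comp_apply, LinearMap.coe_sum, Finset.sum_apply,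
    LinearMap.smul_apply, map_sum, map_smul]
  exact Finset.sum_congr rfl fun i _ => by
    have := LinearMap.congr_fun (hpow i) v
    simp only [LinearMap.coe_comp, Function.comp_apply] at this
    rw [this]

/-- The set of eigenvalues of an endomorphism of a f.d. space is finite. -/
lemma eigen_finite [FiniteDimensional K V] (f : Module.End K V) :
    {μ : K | f.eigenspace μ ≠ ⊥}.Finite := by
  apply (Polynomial.finite_setOf_isRoot (minpoly.ne_zero_of_finite K f)).subset
  intro μ hμ
  exact Module.End.hasEigenvalue_iff_isRoot.mp (Module.End.hasEigenvalue_iff.mpr hμ)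

/-- A semisimple endomorphism of a f.d. space over an alg. closed field is diagonalizable. -/
lemma eigen_sup_eq_top [IsAlgClosed K] [FiniteDimensional K V] {f : Module.End K V}
    (hf : f.IsSemisimple) : ⨆ μ : K, f.eigenspace μ = ⊤ := by
  have h := Module.End.iSup_maxGenEigenspace_eq_top f
  simp_rw [hf.isFinitelySemisimple.maxGenEigenspace_eq_eigenspace] at h
  exact h

lemma commute_of_lie_eq_zero {A : Type*} [Ring A] {a b : A} (h : ⁅a, b⁆ = 0) : Commute a b := by
  rw [Ring.lie_def, sub_eq_zero] at h; exact h

set_option maxHeartbeats 1000000 in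
lemma cartan_key {K V : Type*} [Field K] [IsAlgClosed K] [CharZero K]
    [AddCommGroup V] [Module K V] [FiniteDimensional K V]
    {x : Module.End K V} {B : Submodule K (Module.End K V)}
    (hxB : ∀ b ∈ B, x * b - b * x ∈ B)
    (htr : ∀ y : Module.End K V, (∀ b ∈ B, y * b - b * y ∈ B) →
      LinearMap.trace K V (x * y) = 0) :
    IsNilpotent x := by
  classical
  -- Jordan–Chevalley decomposition
  obtain ⟨n, hnmem, s, hsmem, hn, hs, hx⟩ :=
    Module.End.exists_isNilpotent_isSemisimple (f := x)
  have hxs : Commute x s := Algebra.commute_of_mem_adjoin_self hsmem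
  have hxn : Commute x n := Algebra.commute_of_mem_adjoin_self hnmem
  have hsn : Commute s n := Algebra.commute_of_mem_adjoin_singleton_of_commute hnmem hxs.symm
  -- eigenvalue setup for `s`
  have hsup : ⨆ μ : K, s.eigenspace μ = ⊤ := eigen_sup_eq_top hs
  have hfin : {μ : K | s.eigenspace μ ≠ ⊥}.Finite := eigen_finite s
  suffices hs0 : s = 0 by
    rw [hx, hs0, add_zero]; exact hn
  -- reduce to: every eigenvalue of `s` is zero
  suffices hev : ∀ μ : K, s.eigenspace μ ≠ ⊥ → μ = 0 by
    ext v
    have hv : v ∈ ⨆ μ : K, s.eigenspace μ := hsup ▸ Submodule.mem_top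
    refine Submodule.iSup_induction _ (motive := fun w => s w = 0) hv (fun μ w hw => ?_) (by simp)
      (fun w₁ w₂ h1 h2 => by show s (w₁ + w₂) = 0; rw [map_add, h1, h2, add_zero])
    show s w = 0
    by_cases hμ : s.eigenspace μ = ⊥
    · rw [hμ, Submodule.mem_bot] at hw; rw [hw, map_zero]
    · rw [Module.End.mem_eigenspace_iff.mp hw, hev μ hμ, zero_smul]
  intro μ₀ hμ₀
  rw [← Module.forall_dual_apply_eq_zero_iff ℚ μ₀]
  intro f
  -- the interpolated element y
  set Ωf : Finset K := hfin.toFinset with hΩf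
  have hμ₀Ω : μ₀ ∈ Ωf := by simpa [hΩf] using hμ₀
  set f' : K → K := fun c => ((f c : ℚ) : K) with hf'
  set ρ : K[X] := Lagrange.interpolate Ωf _root_.id f' with hρ
  set y : Module.End K V := aeval s ρ with hy
  have hevalρ : ∀ μ ∈ Ωf, ρ.eval μ = f' μ := fun μ hμ =>
    Lagrange.eval_interpolate_at_node f' (Set.injOn_id _) hμ
  have hyv : ∀ (μ : K) (v : V), v ∈ s.eigenspace μ → y v = ρ.eval μ • v := fun μ v hv =>
    aeval_apply_eigen (Module.End.mem_eigenspace_iff.mp hv) ρ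
  have hyv' : ∀ μ ∈ Ωf, ∀ v ∈ s.eigenspace μ, y v = f' μ • v := fun μ hμ v hv => by
    rw [hyv μ v hv, hevalρ μ hμ]
  -- the adjoint action on End V
  set Ad : Module.End K V →ₗ⁅K⁆ Module.End K (Module.End K V) :=
    LieAlgebra.ad K (Module.End K V) with hAd
  have hAd_apply : ∀ u w : Module.End K V, Ad u w = u * w - w * u := fun u w => by
    rw [hAd, LieAlgebra.ad_apply, Ring.lie_def]
  -- squarefree polynomial annihilating `Ad s`
  set D : Finset K := Finset.image (fun p : K × K => p.1 - p.2) (Ωf ×ˢ Ωf) with hD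
  set P : K[X] := ∏ c ∈ D, (X - C c) with hP
  have hProot : ∀ c ∈ D, P.eval c = 0 := fun c hc => by
    rw [hP, eval_prod]; exact Finset.prod_eq_zero hc (by simp)
  have hP1 : ∀ μ ∈ Ωf, aeval (s - algebraMap K (Module.End K V) μ) P = 0 := by
    intro μ hμ
    ext v
    have hv : v ∈ ⨆ ν : K, s.eigenspace ν := hsup ▸ Submodule.mem_top
    rw [LinearMap.zero_apply]
    refine Submodule.iSup_induction _
      (motive := fun w => aeval (s - algebraMap K (Module.End K V) μ) P w = 0) hv
      (fun ν w hw => ?_) (by simp)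
      (fun w₁ w₂ h1 h2 => by
        show aeval (s - algebraMap K (Module.End K V) μ) P (w₁ + w₂) = 0
        rw [map_add, h1, h2, add_zero])
    show aeval (s - algebraMap K (Module.End K V) μ) P w = 0
    by_cases hν : s.eigenspace ν = ⊥
    · rw [hν, Submodule.mem_bot] at hw; rw [hw, map_zero]
    · have hw' : (s - algebraMap K (Module.End K V) μ) w = (ν - μ) • w := by
        rw [LinearMap.sub_apply, Module.End.mem_eigenspace_iff.mp hw,
          Module.algebraMap_end_apply, sub_smul]
      have hνΩ : ν ∈ Ωf := by simpa [hΩf] using hν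
      rw [aeval_apply_eigen hw' P, hProot (ν - μ)
        (Finset.mem_image.mpr ⟨(ν, μ), Finset.mem_product.mpr ⟨hνΩ, hμ⟩, rfl⟩), zero_smul]
  have hPad : aeval (Ad s) P = 0 := by
    apply LinearMap.ext; intro u
    rw [LinearMap.zero_apply]
    apply LinearMap.ext; intro v
    have hv : v ∈ ⨆ ν : K, s.eigenspace ν := hsup ▸ Submodule.mem_top
    rw [LinearMap.zero_apply]
    refine Submodule.iSup_induction _
      (motive := fun w => (aeval (Ad s) P u) w = 0) hv (fun μ w hw => ?_) (map_zero _)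
      (fun w₁ w₂ h1 h2 => by
        show (aeval (Ad s) P u) (w₁ + w₂) = 0
        rw [map_add, h1, h2, add_zero])
    show (aeval (Ad s) P u) w = 0
    by_cases hμ : s.eigenspace μ = ⊥
    · rw [hμ, Submodule.mem_bot] at hw; rw [hw, map_zero]
    · have hμΩ : μ ∈ Ωf := by simpa [hΩf] using hμ
      -- evaluation at w intertwines Ad s with s - μ
      set g : Module.End K V →ₗ[K] V :=
        { toFun := fun z => z w,
          map_add' := fun z₁ z₂ => rfl,
          map_smul' := fun c z => rfl } with hg
      have hint : g ∘ₗ (Ad s : Module.End K (Module.End K V)) =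
          (s - algebraMap K (Module.End K V) μ) ∘ₗ g := by
        apply LinearMap.ext; intro z
        have hsw : s w = μ • w := Module.End.mem_eigenspace_iff.mp hw
        simp only [LinearMap.coe_comp, Function.comp_apply, hg, LinearMap.coe_mk, AddHom.coe_mk]
        rw [hAd_apply s z, LinearMap.sub_apply, Module.End.mul_apply, Module.End.mul_apply, hsw,
          map_smul, LinearMap.sub_apply, Module.algebraMap_end_apply]
      have := LinearMap.congr_fun (intertwine_aeval hint P) u
      simp only [LinearMap.coe_comp, Function.comp_apply, hg, LinearMap.coe_mk,
        AddHom.coe_mk] at this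
      rw [this]
      rw [hP1 μ hμΩ, LinearMap.zero_apply]
  have hPsep : P.Separable := by
    rw [hP]; exact Polynomial.separable_prod_X_sub_C_iff'.mpr (fun i _ j _ h => h)
  have hadss : (Ad s : Module.End K (Module.End K V)).IsSemisimple :=
    Module.End.isSemisimple_of_squarefree_aeval_eq_zero hPsep.squarefree hPad
  have hsup2 : ⨆ c : K, (Ad s : Module.End K (Module.End K V)).eigenspace c = ⊤ :=
    eigen_sup_eq_top hadss
  have hfin2 : {c : K | (Ad s : Module.End K (Module.End K V)).eigenspace c ≠ ⊥}.Finite :=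
    eigen_finite _
  set Ω2 : Finset K := hfin2.toFinset with hΩ2
  set r : K[X] := Lagrange.interpolate Ω2 _root_.id f' with hr
  have hevalr : ∀ c ∈ Ω2, r.eval c = f' c := fun c hc =>
    Lagrange.eval_interpolate_at_node f' (Set.injOn_id _) hc
  -- `Ad y` acts on the `c`-eigenspace of `Ad s` by `f' c`
  have hady : ∀ c : K, ∀ u ∈ (Ad s : Module.End K (Module.End K V)).eigenspace c,
      Ad y u = f' c • u := by
    intro c u hu
    have hu' : s * u - u * s = c • u := by
      rw [← hAd_apply s u]; exact Module.End.mem_eigenspace_iff.mp hu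
    apply LinearMap.ext; intro v
    have hv : v ∈ ⨆ ν : K, s.eigenspace ν := hsup ▸ Submodule.mem_top
    refine Submodule.iSup_induction _
      (motive := fun w => (Ad y u) w = (f' c • u) w) hv (fun μ w hw => ?_) (by simp) ?_
    swap
    · intro w₁ w₂ h1 h2
      show (Ad y u) (w₁ + w₂) = (f' c • u) (w₁ + w₂)
      rw [map_add, map_add, h1, h2]
    show (Ad y u) w = (f' c • u) w
    have hsw : s w = μ • w := Module.End.mem_eigenspace_iff.mp hw
    have huw : s (u w) = (μ + c) • u w := by
      have := LinearMap.congr_fun hu' w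
      simp only [LinearMap.sub_apply, Module.End.mul_apply, LinearMap.smul_apply] at this
      have h2 : s (u w) = u (s w) + c • u w := by rw [← this]; abel
      rw [h2, hsw, map_smul, add_smul]
    rw [hAd_apply y u]
    simp only [LinearMap.sub_apply, Module.End.mul_apply, LinearMap.smul_apply]
    have hyw : y w = eval μ ρ • w := hyv μ w hw
    by_cases huw0 : u w = 0
    · rw [huw0, hyw, map_smul, huw0, smul_zero, smul_zero, map_zero, sub_zero]
    · have hw0 : w ≠ 0 := fun h => huw0 (by rw [h, map_zero])
      have hμΩ : μ ∈ Ωf := by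
        simp only [hΩf, Set.Finite.mem_toFinset, Set.mem_setOf_eq]
        intro h; rw [h, Submodule.mem_bot] at hw; exact hw0 hw
      have hμcΩ : μ + c ∈ Ωf := by
        simp only [hΩf, Set.Finite.mem_toFinset, Set.mem_setOf_eq]
        intro h
        apply huw0
        have huwm : u w ∈ s.eigenspace (μ + c) := Module.End.mem_eigenspace_iff.mpr huw
        rw [h, Submodule.mem_bot] at huwm; exact huwm
      have hyuw : y (u w) = f' (μ + c) • u w :=
        hyv' (μ + c) hμcΩ (u w) (Module.End.mem_eigenspace_iff.mpr huw)
      rw [hyuw, hyw, map_smul, hevalρ μ hμΩ, ← sub_smul]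
      congr 1
      have hfadd : f (μ + c) = f μ + f c := map_add f μ c
      simp only [hf', hfadd, Rat.cast_add]
      ring
  -- hence Ad y is a polynomial in Ad s
  have hyr : (Ad y : Module.End K (Module.End K V)) = aeval (Ad s) r := by
    apply LinearMap.ext; intro u
    have hu : u ∈ ⨆ c : K, (Ad s : Module.End K (Module.End K V)).eigenspace c :=
      hsup2 ▸ Submodule.mem_top
    refine Submodule.iSup_induction _
      (motive := fun u => (Ad y) u = aeval (Ad s) r u) hu (fun c u hu => ?_) (by simp) ?_
    swap
    · intro u₁ u₂ h1 h2
      show (Ad y) (u₁ + u₂) = aeval (Ad s) r (u₁ + u₂)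
      rw [map_add, map_add, h1, h2]
    show (Ad y) u = aeval (Ad s) r u
    by_cases hc : (Ad s : Module.End K (Module.End K V)).eigenspace c = ⊥
    · rw [hc, Submodule.mem_bot] at hu; rw [hu, map_zero, map_zero]
    · have hcΩ : c ∈ Ω2 := by simpa [hΩ2] using hc
      rw [hady c u hu, aeval_apply_eigen (Module.End.mem_eigenspace_iff.mp hu) r,
        hevalr c hcΩ]
  -- Jordan–Chevalley for Ad x and uniqueness
  obtain ⟨N', hN'mem, S', hS'mem, hN'nil, hS'ss, hsum'⟩ :=
    Module.End.exists_isNilpotent_isSemisimple (f := (Ad x : Module.End K (Module.End K V)))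
  have hAdadd : (Ad x : Module.End K (Module.End K V)) = Ad n + Ad s := by
    rw [hx, map_add]
  have hlie_xn : ⁅x, n⁆ = 0 := by rw [Ring.lie_def, sub_eq_zero]; exact hxn.eq
  have hlie_xs : ⁅x, s⁆ = 0 := by rw [Ring.lie_def, sub_eq_zero]; exact hxs.eq
  have hc1 : Commute (Ad x : Module.End K (Module.End K V)) (Ad n) := by
    apply commute_of_lie_eq_zero
    rw [← LieHom.map_lie, hlie_xn, map_zero]
  have hc2 : Commute (Ad x : Module.End K (Module.End K V)) (Ad s) := by
    apply commute_of_lie_eq_zero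
    rw [← LieHom.map_lie, hlie_xs, map_zero]
  have hcN' : Commute (Ad n : Module.End K (Module.End K V)) N' :=
    Algebra.commute_of_mem_adjoin_singleton_of_commute hN'mem hc1.symm
  have hcS' : Commute S' (Ad s : Module.End K (Module.End K V)) :=
    (Algebra.commute_of_mem_adjoin_singleton_of_commute hS'mem hc2.symm).symm
  have hdiff : S' - Ad s = Ad n - N' := by
    rw [sub_eq_sub_iff_add_eq_add, add_comm S' N', ← hsum', hAdadd]
  have hnil' : IsNilpotent ((Ad n : Module.End K (Module.End K V)) - N') :=
    hcN'.isNilpotent_sub (LieAlgebra.ad_nilpotent_of_nilpotent (R := K) hn) hN'nil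
  have hss' : (S' - (Ad s : Module.End K (Module.End K V))).IsSemisimple :=
    Module.End.IsSemisimple.sub_of_commute hcS' hS'ss hadss
  have hS'eq : S' = Ad s := by
    rw [← sub_eq_zero]
    exact Module.End.eq_zero_of_isNilpotent_isSemisimple (by rw [hdiff]; exact hnil') hss'
  have hy_adjoin : (Ad y : Module.End K (Module.End K V)) ∈ Algebra.adjoin K {(Ad x :
      Module.End K (Module.End K V))} := by
    have h1 : (Ad y : Module.End K (Module.End K V)) ∈ Algebra.adjoin K {(Ad s :
        Module.End K (Module.End K V))} := by
      rw [hyr, Algebra.adjoin_singleton_eq_range_aeval]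
      exact ⟨r, rfl⟩
    have h2 : Algebra.adjoin K {(Ad s : Module.End K (Module.End K V))} ≤
        Algebra.adjoin K {(Ad x : Module.End K (Module.End K V))} :=
      Algebra.adjoin_le (Set.singleton_subset_iff.mpr (hS'eq ▸ hS'mem))
    exact h2 h1
  -- membership of y in the "normalizer"
  have hymem : ∀ b ∈ B, y * b - b * y ∈ B := by
    have hgen : ∀ u ∈ Algebra.adjoin K {(Ad x : Module.End K (Module.End K V))},
        ∀ b ∈ B, u b ∈ B := by
      intro u hu
      induction hu using Algebra.adjoin_induction with
      | mem z hz =>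
        intro b hb
        rw [Set.mem_singleton_iff] at hz
        rw [hz, hAd_apply x b]
        exact hxB b hb
      | algebraMap q =>
        intro b hb
        rw [Module.algebraMap_end_apply]
        exact Submodule.smul_mem B q hb
      | add u₁ u₂ _ _ h1 h2 =>
        intro b hb
        rw [LinearMap.add_apply]
        exact Submodule.add_mem B (h1 b hb) (h2 b hb)
      | mul u₁ u₂ _ _ h1 h2 =>
        intro b hb
        rw [Module.End.mul_apply]
        exact h1 _ (h2 b hb)
    intro b hb
    have hAdyb := hgen _ hy_adjoin b hb
    rwa [hAd_apply y b] at hAdyb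
  -- trace computation
  have h0tr := htr y hymem
  have hmaps : ∀ (g : Module.End K V), Commute s g → ∀ μ : K,
      Set.MapsTo g (s.eigenspace μ) (s.eigenspace μ) := by
    intro g hg μ
    have := Module.End.mapsTo_genEigenspace_of_comm hg μ 1
    simpa [Module.End.eigenspace_def] using this
  have hmX : ∀ μ : K, Set.MapsTo x (s.eigenspace μ) (s.eigenspace μ) := hmaps x hxs.symm
  have hmN : ∀ μ : K, Set.MapsTo n (s.eigenspace μ) (s.eigenspace μ) := hmaps n hsn
  have hsy : Commute s y := Algebra.commute_of_mem_adjoin_self (R := K)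
    (by rw [hy, Algebra.adjoin_singleton_eq_range_aeval K s]; exact ⟨ρ, rfl⟩)
  have hmY : ∀ μ : K, Set.MapsTo y (s.eigenspace μ) (s.eigenspace μ) := hmaps y hsy
  have hmXY : ∀ μ : K, Set.MapsTo (x * y) (s.eigenspace μ) (s.eigenspace μ) :=
    fun μ v hv => hmX μ (hmY μ hv)
  have hInt : DirectSum.IsInternal s.eigenspace :=
    DirectSum.isInternal_submodule_of_iSupIndep_of_iSup_eq_top
      (Module.End.eigenspaces_iSupIndep s) hsup
  have htrace_eq := LinearMap.trace_eq_sum_trace_restrict' hInt hfin hmXY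
  have hterm : ∀ μ ∈ Ωf, (LinearMap.trace K (s.eigenspace μ)) ((x * y).restrict (hmXY μ)) =
      f' μ * (μ * (finrank K (s.eigenspace μ) : K)) := by
    intro μ hμ
    have hres : (x * y).restrict (hmXY μ) = f' μ • (x.restrict (hmX μ)) := by
      apply LinearMap.ext; rintro ⟨v, hv⟩
      apply Subtype.ext
      have h1 : ((x * y).restrict (hmXY μ) ⟨v, hv⟩ : V) = (x * y) v := rfl
      have h2 : ((f' μ • x.restrict (hmX μ)) ⟨v, hv⟩ : V) = f' μ • x v := rfl
      rw [h1, h2, Module.End.mul_apply, hyv' μ hμ v hv, map_smul]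
    have hresx : x.restrict (hmX μ) = n.restrict (hmN μ) + μ • (1 :
        Module.End K (s.eigenspace μ)) := by
      apply LinearMap.ext; rintro ⟨v, hv⟩
      apply Subtype.ext
      have h1 : (x.restrict (hmX μ) ⟨v, hv⟩ : V) = x v := rfl
      have h2 : (((n.restrict (hmN μ) + μ • (1 : Module.End K (s.eigenspace μ)))) ⟨v, hv⟩ : V)
          = n v + μ • v := rfl
      rw [h1, h2, hx, LinearMap.add_apply, Module.End.mem_eigenspace_iff.mp hv]
    have htr_n : (LinearMap.trace K (s.eigenspace μ)) (n.restrict (hmN μ)) = 0 :=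
      (LinearMap.isNilpotent_trace_of_isNilpotent
        (Module.End.isNilpotent.restrict (hmN μ) hn)).eq_zero
    rw [hres, map_smul, hresx, map_add, htr_n, map_smul, LinearMap.trace_one, zero_add,
      smul_eq_mul, smul_eq_mul]
  have hsum0 : ∑ μ ∈ Ωf, f' μ * (μ * (finrank K (s.eigenspace μ) : K)) = 0 := by
    rw [← Finset.sum_congr rfl hterm, ← htrace_eq, h0tr]
  have hQ : ∑ μ ∈ Ωf, (finrank K (s.eigenspace μ) : ℚ) * (f μ * f μ) = 0 := by
    have hf0 := congrArg f hsum0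
    rw [map_sum, map_zero] at hf0
    rw [← hf0]
    refine Finset.sum_congr rfl fun μ _ => ?_
    have h1 : f' μ * (μ * (finrank K (s.eigenspace μ) : K)) =
        (f μ) • ((finrank K (s.eigenspace μ) : ℕ) • μ) := by
      rw [Rat.smul_def, nsmul_eq_mul, hf']
      ring
    rw [h1, map_smul, map_nsmul, smul_eq_mul, nsmul_eq_mul]
    ring
  have hnonneg : ∀ μ ∈ Ωf, (0:ℚ) ≤ (finrank K (s.eigenspace μ) : ℚ) * (f μ * f μ) :=
    fun μ _ => mul_nonneg (Nat.cast_nonneg _) (mul_self_nonneg _)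
  have hzero := (Finset.sum_eq_zero_iff_of_nonneg hnonneg).mp hQ μ₀ hμ₀Ω
  have hnt : Nontrivial (s.eigenspace μ₀) := Submodule.nontrivial_iff_ne_bot.mpr hμ₀
  have hdpos : (0:ℚ) < (finrank K (s.eigenspace μ₀) : ℚ) := by
    exact_mod_cast Module.finrank_pos (R := K) (M := s.eigenspace μ₀)
  rcases mul_eq_zero.mp hzero with h | h
  · exact absurd h hdpos.ne'
  · exact mul_self_eq_zero.mp h

end SemisimpleLeibnizAux


/-- Derived series of a subspace `I` (computed inside the ambient algebra):
`derSeriesIn br I 0 = I`, `derSeriesIn br I (n+1) = [derSeriesIn br I n, derSeriesIn br I n]`.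
A subalgebra/ideal `I` is solvable iff some term vanishes. -/
def derSeriesIn {K A : Type*} [Field K] [AddCommGroup A] [Module K A]
    (br : A →ₗ[K] A →ₗ[K] A) (I : Submodule K A) : ℕ → Submodule K A
  | 0 => I
  | n + 1 => bracketSpan br (derSeriesIn br I n) (derSeriesIn br I n)

/-- `Leib(A)`: the span of all squares `[a, a]`. -/
def leibIdeal {K A : Type*} [Field K] [AddCommGroup A] [Module K A]
    (br : A →ₗ[K] A →ₗ[K] A) : Submodule K A :=
  Submodule.span K {x | ∃ a : A, br a a = x}

attribute [local instance 100] LieRing.ofAssociativeRing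

/-- the Killing form `κ(a, b) = tr(L_a ∘ L_b)` of a finite-dimensional
semisimple (left) Leibniz algebra over an algebraically closed field of
characteristic zero is nondegenerate: its radical equals `Leib(A)`. -/
theorem semisimple_leibniz_killing_form_nondegenerate
    {K A : Type*} [Field K] [IsAlgClosed K] [CharZero K]
    [AddCommGroup A] [Module K A] [FiniteDimensional K A]
    (br : A →ₗ[K] A →ₗ[K] A)
    (leibniz : ∀ a b c : A, br a (br b c) = br (br a b) c + br b (br a c))
    (hss : ∀ I : Submodule K A, (∀ a : A, ∀ x ∈ I, br a x ∈ I ∧ br x a ∈ I) →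
      (∃ m : ℕ, derSeriesIn br I m = ⊥) → I ≤ leibIdeal br) :
    ∀ b : A, (∀ a : A, LinearMap.trace K A (br b ∘ₗ br a) = 0) ↔
      b ∈ leibIdeal br := by

  classical
  open SemisimpleLeibnizAux in
  -- the operator identity L_{[a,b]} = L_a L_b - L_b L_a
  have hop : ∀ a b : A, br (br a b) = br a * br b - br b * br a := by
    intro a b
    apply LinearMap.ext; intro c
    rw [LinearMap.sub_apply, Module.End.mul_apply, Module.End.mul_apply]
    exact eq_sub_of_add_eq (leibniz a b c).symm
  have hleib_ker : leibIdeal br ≤ LinearMap.ker br := by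
    rw [leibIdeal, Submodule.span_le]
    rintro _ ⟨a, rfl⟩
    rw [SetLike.mem_coe, LinearMap.mem_ker, hop a a, sub_self]
  -- the radical of the Killing form
  set S : Submodule K A :=
    { carrier := {b | ∀ a, LinearMap.trace K A (br b * br a) = 0},
      add_mem' := fun hb hc a => by
        rw [map_add, add_mul, map_add]
        rw [hb a, hc a, add_zero]
      zero_mem' := fun a => by rw [map_zero, zero_mul, map_zero]
      smul_mem' := fun t b hb a => by
        rw [map_smul, smul_mul_assoc, map_smul, hb a, smul_zero] } with hSdef
  have hSmem : ∀ b : A, b ∈ S ↔ ∀ a, LinearMap.trace K A (br b * br a) = 0 := fun b => Iff.rfl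
  -- S is a two-sided ideal
  have hideal1 : ∀ a x, x ∈ S → br a x ∈ S := by
    intro a x hx
    rw [hSmem]
    intro c
    rw [hop a x, sub_mul, map_sub]
    have h1 : LinearMap.trace K A (br a * br x * br c) =
        LinearMap.trace K A (br x * (br c * br a)) := by
      rw [mul_assoc, LinearMap.trace_mul_comm, mul_assoc]
    have h2 : br x * br a * br c = br x * (br a * br c) := mul_assoc _ _ _
    rw [h1, h2, ← map_sub, ← mul_sub]
    have h3 : br c * br a - br a * br c = - br (br a c) := by rw [hop a c, neg_sub]
    rw [h3, mul_neg, map_neg, (hSmem x).mp hx (br a c), neg_zero]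
  have hideal2 : ∀ a x, x ∈ S → br x a ∈ S := by
    intro a x hx
    rw [hSmem]
    intro c
    have h : br (br x a) = - br (br a x) := by rw [hop, hop, neg_sub]
    rw [h, neg_mul, map_neg, (hSmem _).mp (hideal1 a x hx) c, neg_zero]
  -- the image of S in End(A)
  set g : Submodule K (Module.End K A) := S.map br with hgdef
  have hgcl : ∀ u ∈ g, ∀ v ∈ g, u * v - v * u ∈ g := by
    rintro _ ⟨p, hp, rfl⟩ _ ⟨q, hq, rfl⟩
    rw [← hop p q]
    exact ⟨br p q, hideal1 p q hq, rfl⟩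
  have hgtr : ∀ u ∈ g, ∀ v ∈ g, LinearMap.trace K A (u * v) = 0 := by
    rintro _ ⟨p, hp, rfl⟩ _ ⟨q, hq, rfl⟩
    exact (hSmem p).mp hp q
  -- the span of commutators
  set g₁ : Submodule K (Module.End K A) :=
    Submodule.span K {w | ∃ u ∈ g, ∃ v ∈ g, u * v - v * u = w} with hg₁def
  have hg₁g : g₁ ≤ g := Submodule.span_le.mpr
    (by rintro _ ⟨u, hu, v, hv, rfl⟩; exact hgcl u hu v hv)
  -- trace of elements of g₁ against the normalizer of g vanishes
  set T : Submodule K (Module.End K A) :=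
    { carrier := {w | ∀ z : Module.End K A,
        (∀ b ∈ g, z * b - b * z ∈ g) → LinearMap.trace K A (w * z) = 0},
      add_mem' := fun hb hc z hz => by
        rw [add_mul, map_add, hb z hz, hc z hz, add_zero]
      zero_mem' := fun z hz => by rw [zero_mul, map_zero]
      smul_mem' := fun t w hw z hz => by
        rw [smul_mul_assoc, map_smul, hw z hz, smul_zero] } with hTdef
  have hg₁T : g₁ ≤ T := by
    rw [hg₁def, Submodule.span_le]
    rintro _ ⟨u, hu, v, hv, rfl⟩
    intro z hz
    have hid : LinearMap.trace K A ((u * v - v * u) * z) =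
        LinearMap.trace K A (u * (v * z - z * v)) := by
      rw [sub_mul, mul_sub, map_sub, map_sub]
      have e1 : LinearMap.trace K A ((u * v) * z) = LinearMap.trace K A (u * (v * z)) := by
        rw [mul_assoc]
      have e2 : LinearMap.trace K A ((v * u) * z) = LinearMap.trace K A (u * (z * v)) := by
        rw [mul_assoc, LinearMap.trace_mul_comm, mul_assoc]
      rw [e1, e2]
    have hmem : v * z - z * v ∈ g := by
      have h := hz v hv
      have h2 : v * z - z * v = -(z * v - v * z) := by rw [neg_sub]
      rw [h2]
      exact Submodule.neg_mem g h
    rw [hid]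
    exact hgtr u hu _ hmem
  -- Cartan's criterion: all elements of g₁ are nilpotent endomorphisms
  have hnil : ∀ w ∈ g₁, IsNilpotent w := fun w hw =>
    SemisimpleLeibnizAux.cartan_key (fun b hb => hgcl w (hg₁g hw) b hb)
      (fun z hz => hg₁T hw z hz)
  -- g₁ is a Lie subalgebra all of whose elements are nilpotent: Engel
  set H₁ : LieSubalgebra K (Module.End K A) :=
    { toSubmodule := g₁,
      lie_mem' := fun {u v} hu hv =>
        Submodule.subset_span ⟨u, hg₁g hu, v, hg₁g hv, (Ring.lie_def u v).symm⟩ } with hH₁def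
  haveI hnoeth : IsNoetherian K H₁ := inferInstanceAs (IsNoetherian K g₁)
  haveI hLN : LieRing.IsNilpotent H₁ := LieAlgebra.isNilpotent_iff_forall.mpr
    (fun z => LieAlgebra.isNilpotent_ad_of_isNilpotent (hnil z.1 z.2))
  obtain ⟨m, hm⟩ := LieAlgebra.IsSolvable.solvable K H₁
  -- transfer the derived series back to the Leibniz algebra
  have htransfer : ∀ k : ℕ, Submodule.map br (derSeriesIn br S (k+1)) ≤
      Submodule.map (H₁.toSubmodule.subtype)
        (LieSubmodule.toSubmodule (LieAlgebra.derivedSeries K H₁ k)) := by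
    intro k
    induction k with
    | zero =>
      show Submodule.map br (bracketSpan br S S) ≤ _
      rw [bracketSpan, Submodule.map_span, Submodule.span_le]
      rintro _ ⟨_, ⟨a, ha, b, hb, rfl⟩, rfl⟩
      have hmem : br (br a b) ∈ g₁ := Submodule.subset_span
        ⟨br a, ⟨a, ha, rfl⟩, br b, ⟨b, hb, rfl⟩, (hop a b).symm⟩
      refine ⟨⟨br (br a b), hmem⟩, ?_, rfl⟩
      simp [LieAlgebra.derivedSeries_def]
    | succ k ih =>
      show Submodule.map br (bracketSpan br (derSeriesIn br S (k+1)) (derSeriesIn br S (k+1))) ≤ _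
      rw [bracketSpan, Submodule.map_span, Submodule.span_le]
      rintro _ ⟨_, ⟨a, ha, b, hb, rfl⟩, rfl⟩
      obtain ⟨(u : H₁), hu, hu'⟩ := ih ⟨a, ha, rfl⟩
      obtain ⟨(v : H₁), hv, hv'⟩ := ih ⟨b, hb, rfl⟩
      have hbr : br (br a b) = (H₁.toSubmodule.subtype) ⁅u, v⁆ := by
        have : (↑(⁅u, v⁆ : H₁) : Module.End K A) = ⁅(u : Module.End K A), (v : Module.End K A)⁆ :=
          rfl
        rw [hop a b, ← hu', ← hv']
        show _ = (↑(⁅u, v⁆ : H₁) : Module.End K A)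
        rw [this, Ring.lie_def]
        rfl
      refine ⟨(⁅u, v⁆ : H₁), ?_, hbr.symm⟩
      have hu2 : u ∈ LieAlgebra.derivedSeries K H₁ k := hu
      have hv2 : v ∈ LieAlgebra.derivedSeries K H₁ k := hv
      show (⁅u, v⁆ : H₁) ∈ LieAlgebra.derivedSeries K H₁ (k+1)
      rw [LieAlgebra.derivedSeries_def, LieAlgebra.derivedSeriesOfIdeal_succ]
      rw [LieAlgebra.derivedSeries_def] at hu2 hv2
      exact LieSubmodule.lie_mem_lie hu2 hv2
  -- conclude solvability of S
  have hker : derSeriesIn br S (m+1) ≤ LinearMap.ker br := by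
    intro z hz
    have h1 : br z ∈ Submodule.map br (derSeriesIn br S (m+1)) := ⟨z, hz, rfl⟩
    have h2 := htransfer m h1
    rw [hm] at h2
    simp only [LieSubmodule.bot_toSubmodule, Submodule.map_bot, Submodule.mem_bot] at h2
    exact LinearMap.mem_ker.mpr h2
  have hsolv : derSeriesIn br S (m+2) = ⊥ := by
    apply le_bot_iff.mp
    show bracketSpan br (derSeriesIn br S (m+1)) (derSeriesIn br S (m+1)) ≤ ⊥
    rw [bracketSpan, Submodule.span_le]
    rintro _ ⟨a, ha, b, hb, rfl⟩
    have h0 : br a = 0 := LinearMap.mem_ker.mp (hker ha)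
    simp [h0]
  have hSleib : S ≤ leibIdeal br :=
    hss S (fun a x hx => ⟨hideal1 a x hx, hideal2 a x hx⟩) ⟨m+2, hsolv⟩
  -- conclusion
  intro b
  constructor
  · intro hb
    exact hSleib ((hSmem b).mpr (fun a => hb a))
  · intro hb a
    have h0 : br b = 0 := LinearMap.mem_ker.mp (hleib_ker hb)
    rw [h0, LinearMap.zero_comp, map_zero]
end
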